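/- arXiv:1305.2521 — 3 statements merged into one kernel-verified Lean document; each statement's English description precedes it below -/
import Mathlib

section
/- Let (X,μ) be a non-atomic probability space and T a tree on X. Then for every I ∈ T and every a with 0 < a < 1, there exists a subfamily F(I) ⊆ T consisting of pairwise disjoint subsets of I such that μ(⋃_{J ∈ F(I)} J) = Σ_{J ∈ F(I)} μ(J) = (1 − a) μ(I). -/
open MeasureTheory Set
open scoped ENNReal

/-- The generations of a tree determined by the child map `C`. -/
def treeGen {X : Type*} (C : Set X → Set (Set X)) : ℕ → Set (Set X)
  | 0 => {Set.univ}
  | (m+1) => ⋃ I ∈ treeGen C m, C I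

/-- `T` is a tree on the probability space `(X, μ)` with child map `C`. -/
structure IsTree {X : Type*} [MeasurableSpace X] (μ : Measure X)
    (T : Set (Set X)) (C : Set X → Set (Set X)) : Prop where
  univ_mem : Set.univ ∈ T
  measurableSet : ∀ I ∈ T, MeasurableSet I
  pos : ∀ I ∈ T, 0 < μ I
  child_sub_tree : ∀ I ∈ T, C I ⊆ T
  child_countable : ∀ I ∈ T, (C I).Countable
  child_nontriv : ∀ I ∈ T, ∃ J ∈ C I, ∃ K ∈ C I, J ≠ K
  child_subset : ∀ I ∈ T, ∀ J ∈ C I, J ⊆ I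
  child_disjoint : ∀ I ∈ T, ∀ J ∈ C I, ∀ K ∈ C I, J ≠ K → Disjoint J K
  child_cover : ∀ I ∈ T, I = ⋃₀ C I
  eq_gen : T = ⋃ m, treeGen C m
  gen_small : Filter.Tendsto (fun m => ⨆ I ∈ treeGen C m, μ I) Filter.atTop (nhds 0)

/-- The dyadic maximal operator associated to the tree `T`. -/
noncomputable def maxT {X : Type*} [MeasurableSpace X] (μ : Measure X)
    (T : Set (Set X)) (φ : X → ℝ) (x : X) : ℝ :=
  sSup {r : ℝ | ∃ I ∈ T, x ∈ I ∧ r = (∫ u in I, |φ u| ∂μ) / (μ I).toReal}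

/-- `φ : X → ℝ` has decreasing rearrangement `g : (0,1] → ℝ`. -/
def HasRearrangement {X : Type*} [MeasurableSpace X] (μ : Measure X)
    (φ : X → ℝ) (g : ℝ → ℝ) : Prop :=
  ∀ l : ℝ, 0 ≤ l → μ {x | l < φ x} = volume {t ∈ Set.Ioc (0:ℝ) 1 | l < g t}

/-- `H_p(z) = -(p-1) z^p + p z^{p-1}`. -/
noncomputable def Hfun (p z : ℝ) : ℝ := -(p-1) * z ^ p + p * z ^ (p-1)

/-- `ω_p`, the inverse function of `H_p : [1, p/(p-1)] → [0,1]`. -/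
noncomputable def omegaFun (p b : ℝ) : ℝ :=
  sSup {z : ℝ | z ∈ Set.Icc 1 (p/(p-1)) ∧ Hfun p z = b}

/-- The decreasing rearrangement `ψ*(t) = sup_{e ⊆ X, μ(e) = t} inf_{x ∈ e} ψ(x)`. -/
noncomputable def decRearr {X : Type*} [MeasurableSpace X] (μ : Measure X)
    (ψ : X → ℝ) (t : ℝ) : ℝ :=
  sSup {r : ℝ | ∃ e : Set X, μ e = ENNReal.ofReal t ∧ r = sInf (ψ '' e)}

open scoped Classical in
/-- The greedy finite selections. -/
noncomputable def greedyFinsets {X : Type*} (e : ℕ → Set X) (w : ℕ → ℝ≥0∞) (b : ℝ≥0∞) :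
    ℕ → Finset ℕ
  | 0 => ∅
  | (n+1) =>
    if e n ∉ e '' ((greedyFinsets e w b n : Finset ℕ) : Set ℕ) ∧
        (∑ j ∈ greedyFinsets e w b n, w j) + w n ≤ b
      then insert n (greedyFinsets e w b n) else greedyFinsets e w b n

/-- Greedy selection: from a countable family `A` of sets, select a subfamily `G`
whose total measure is at most `b`, and such that adding any unselected member
would exceed `b`. -/
lemma exists_greedy {X : Type*} [MeasurableSpace X] (μ : Measure X)
    (A : Set (Set X)) (hA : A.Countable) (b : ℝ≥0∞) :
    ∃ G, G ⊆ A ∧ (∑' J : G, μ (J : Set X)) ≤ b ∧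
      ∀ J ∈ A \ G, b < (∑' J : G, μ (J : Set X)) + μ J := by
  classical
  rcases A.eq_empty_or_nonempty with hAe | hAne
  · refine ⟨∅, by simp, by simp, ?_⟩
    intro J hJ; simp [hAe] at hJ
  obtain ⟨e, rfl⟩ := Set.Countable.exists_eq_range hA hAne
  set f : ℕ → ℝ≥0∞ := fun k => μ (e k) with hf
  set S : ℕ → Finset ℕ := greedyFinsets e f b with hS
  have hSsucc : ∀ n, S (n+1) = if e n ∉ e '' ((S n : Set ℕ)) ∧ (∑ j ∈ S n, f j) + f n ≤ b
      then insert n (S n) else S n := fun n => rfl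
  have hstep : ∀ n, S n ⊆ S (n+1) := by
    intro n; rw [hSsucc]; split
    · exact Finset.subset_insert _ _
    · exact subset_rfl
  have hmono : Monotone S := monotone_nat_of_le_succ hstep
  have hlt : ∀ n k, k ∈ S n → k < n := by
    intro n
    induction n with
    | zero => intro k hk; simp [hS, greedyFinsets] at hk
    | succ n ih =>
      intro k hk
      rw [hSsucc] at hk
      split_ifs at hk with hc
      · rcases Finset.mem_insert.mp hk with rfl | hk
        · exact Nat.lt_succ_self _
        · exact (ih k hk).trans (Nat.lt_succ_self _)
      · exact (ih k hk).trans (Nat.lt_succ_self _)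
  have hsum : ∀ n, (∑ j ∈ S n, f j) ≤ b := by
    intro n
    induction n with
    | zero => simp [hS, greedyFinsets]
    | succ n ih =>
      rw [hSsucc]
      split_ifs with hc
      · have hn : n ∉ S n := fun h => lt_irrefl n (hlt n n h)
        rw [Finset.sum_insert hn, add_comm]
        exact hc.2
      · exact ih
  have hfirst : ∀ n k, k ∈ S n → k ∈ S (k+1) := by
    intro n
    induction n with
    | zero => intro k hk; simp [hS, greedyFinsets] at hk
    | succ n ih =>
      intro k hk
      rw [hSsucc] at hk
      split_ifs at hk with hc
      · rcases Finset.mem_insert.mp hk with rfl | hk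
        · rw [hSsucc]; rw [if_pos hc]; exact Finset.mem_insert_self _ _
        · exact ih k hk
      · exact ih k hk
  set K : Set ℕ := {k | k ∈ S (k+1)} with hK
  have hmemK : ∀ n k, k ∈ S n → k ∈ K := fun n k hk => hfirst n k hk
  have hcond : ∀ k ∈ K, e k ∉ e '' ((S k : Set ℕ)) ∧ (∑ j ∈ S k, f j) + f k ≤ b := by
    intro k hk
    have hk' : k ∈ S (k+1) := hk
    rw [hSsucc] at hk'
    split_ifs at hk' with hc
    · exact hc
    · exact absurd (hlt k k hk') (lt_irrefl k)
  have hinj : Set.InjOn e K := by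
    intro k1 hk1 k2 hk2 heq
    by_contra hne
    rcases lt_or_gt_of_ne hne with h | h
    · have : k1 ∈ S k2 := hmono h (hfirst _ _ hk1)
      exact (hcond k2 hk2).1 ⟨k1, by exact_mod_cast this, heq⟩
    · have : k2 ∈ S k1 := hmono h (hfirst _ _ hk2)
      exact (hcond k1 hk1).1 ⟨k2, by exact_mod_cast this, heq.symm⟩
  have hGsum : (∑' J : (e '' K), μ (J : Set X)) = ∑' k, K.indicator f k := by
    rw [tsum_image _ hinj]; exact tsum_subtype K f
  refine ⟨e '' K, image_subset_range _ _, ?_, ?_⟩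
  · -- upper bound
    rw [hGsum]
    refine Summable.tsum_le_of_sum_le ENNReal.summable ?_
    intro s
    have hfilter : (∑ k ∈ s, K.indicator f k) = ∑ k ∈ s.filter (· ∈ K), f k := by
      rw [Finset.sum_filter]
      refine Finset.sum_congr rfl ?_
      intro k _
      by_cases hk : k ∈ K <;> simp [Set.indicator, hk]
    rw [hfilter]
    set s' := s.filter (· ∈ K) with hs'
    set N := s'.sup (· + 1) with hN
    have hsub : s' ⊆ S N := by
      intro k hk
      have hkK : k ∈ K := by simp [hs'] at hk; exact hk.2
      have : k + 1 ≤ N := Finset.le_sup (f := (· + 1)) hk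
      exact hmono this hkK
    calc (∑ k ∈ s', f k) ≤ ∑ k ∈ S N, f k :=
          Finset.sum_le_sum_of_subset hsub
      _ ≤ b := hsum N
  · -- maximality
    intro J hJ
    obtain ⟨⟨n, rfl⟩, hnG⟩ := hJ
    have hnK : n ∉ K := fun h => hnG (mem_image_of_mem e h)
    have hne : n ∉ S (n+1) := hnK
    rw [hSsucc] at hne
    by_cases hc : e n ∉ e '' ((S n : Set ℕ)) ∧ (∑ j ∈ S n, f j) + f n ≤ b
    · exact absurd (by rw [if_pos hc]; exact Finset.mem_insert_self _ _) hne
    push_neg at hc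
    by_cases him : e n ∈ e '' ((S n : Set ℕ))
    · obtain ⟨k, hk, hek⟩ := him
      have : k ∈ K := hmemK n k (by exact_mod_cast hk)
      exact absurd (hek ▸ mem_image_of_mem e this) hnG
    have hbb : b < (∑ j ∈ S n, f j) + f n := hc him
    have hle2 : (∑ j ∈ S n, f j) ≤ ∑' k, K.indicator f k := by
      have : (∑ j ∈ S n, f j) = ∑ j ∈ S n, K.indicator f j := by
        refine Finset.sum_congr rfl ?_
        intro k hk
        rw [Set.indicator_of_mem (hmemK n k hk)]
      rw [this]
      exact ENNReal.sum_le_tsum _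
    rw [hGsum]
    exact hbb.trans_le (add_le_add_left hle2 _)

/-- Relative generations starting from `I`. -/
def genFrom {X : Type*} (C : Set X → Set (Set X)) (I : Set X) : ℕ → Set (Set X)
  | 0 => {I}
  | (m+1) => ⋃ J ∈ genFrom C I m, C J

lemma genFrom_subset_treeGen {X : Type*} (C : Set X → Set (Set X)) (I : Set X)
    (m0 : ℕ) (h : I ∈ treeGen C m0) : ∀ m, genFrom C I m ⊆ treeGen C (m0 + m) := by
  intro m
  induction m with
  | zero => intro J hJ; rw [mem_singleton_iff.mp hJ]; exact h
  | succ m ih =>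
    intro K hK
    obtain ⟨J, hJ, hKJ⟩ := mem_iUnion₂.mp hK
    show K ∈ treeGen C (m0 + m + 1)
    exact mem_iUnion₂.mpr ⟨J, ih hJ, hKJ⟩

/-- Invariant for the recursive splitting construction. -/
def SplitInv {X : Type*} [MeasurableSpace X] (μ : Measure X) (T : Set (Set X))
    (C : Set X → Set (Set X)) (I : Set X) (t : ℝ≥0∞) (m : ℕ)
    (F R : Set (Set X)) : Prop :=
  F ⊆ T ∧ R ⊆ T ∧ F.Countable ∧ R.Countable ∧
  (∀ J ∈ F, J ⊆ I) ∧ (∀ J ∈ R, J ⊆ I) ∧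
  F.Pairwise Disjoint ∧ R.Pairwise Disjoint ∧
  (∀ L ∈ F, ∀ J ∈ R, Disjoint L J) ∧
  R ⊆ genFrom C I m ∧
  (∑' J : F, μ (J : Set X)) ≤ t ∧
  (∑' J : F, μ (J : Set X)) + μ (⋃₀ R) = μ I ∧
  (1 ≤ m → ∀ J ∈ R, t < (∑' J : F, μ (J : Set X)) + μ J)

lemma split_step {X : Type*} [MeasurableSpace X] (μ : Measure X)
    [IsProbabilityMeasure μ] (T : Set (Set X)) (C : Set X → Set (Set X))
    (hT : IsTree μ T C) (I : Set X) (t : ℝ≥0∞) (ht : t < μ I) (m : ℕ)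
    {F R : Set (Set X)} (h : SplitInv μ T C I t m F R) :
    ∃ p : Set (Set X) × Set (Set X),
      SplitInv μ T C I t (m+1) p.1 p.2 ∧ F ⊆ p.1 := by
  obtain ⟨hFT, hRT, hFc, hRc, hFI, hRI, hFp, hRp, hFR, hRg, hFle, hFeq, _⟩ := h
  have htne : t ≠ ⊤ := (ht.trans_le (le_top)).ne
  have hFne : (∑' J : F, μ (J : Set X)) ≠ ⊤ := (hFle.trans_lt htne.lt_top).ne
  set A : Set (Set X) := ⋃ J ∈ R, C J with hA
  have memA : ∀ K : Set X, K ∈ A ↔ ∃ J, ∃ _ : J ∈ R, K ∈ C J := fun K => mem_iUnion₂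
  have hAT : A ⊆ T := by
    intro K hK
    obtain ⟨J, hJ, hKJ⟩ := (memA K).mp hK
    exact hT.child_sub_tree J (hRT hJ) hKJ
  have hAc : A.Countable := Countable.biUnion hRc fun J hJ => hT.child_countable J (hRT hJ)
  have hAI : ∀ K ∈ A, K ⊆ I := by
    intro K hK
    obtain ⟨J, hJ, hKJ⟩ := (memA K).mp hK
    exact (hT.child_subset J (hRT hJ) K hKJ).trans (hRI J hJ)
  have hApos : ∀ K ∈ A, 0 < μ K := fun K hK => hT.pos K (hAT hK)
  have hAp : A.Pairwise Disjoint := by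
    intro K1 hK1 K2 hK2 hne
    obtain ⟨J1, hJ1, hKJ1⟩ := (memA K1).mp hK1
    obtain ⟨J2, hJ2, hKJ2⟩ := (memA K2).mp hK2
    by_cases hJeq : J1 = J2
    · subst hJeq
      exact hT.child_disjoint J1 (hRT hJ1) K1 hKJ1 K2 hKJ2 hne
    · exact (hRp hJ1 hJ2 hJeq).mono (hT.child_subset J1 (hRT hJ1) K1 hKJ1)
        (hT.child_subset J2 (hRT hJ2) K2 hKJ2)
  have hFA : ∀ L ∈ F, ∀ K ∈ A, Disjoint L K := by
    intro L hL K hK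
    obtain ⟨J, hJ, hKJ⟩ := (memA K).mp hK
    exact (hFR L hL J hJ).mono_right (hT.child_subset J (hRT hJ) K hKJ)
  have hUA : ⋃₀ A = ⋃₀ R := by
    apply subset_antisymm
    · intro x hx
      obtain ⟨K, hK, hxK⟩ := hx
      obtain ⟨J, hJ, hKJ⟩ := (memA K).mp hK
      exact ⟨J, hJ, hT.child_subset J (hRT hJ) K hKJ hxK⟩
    · intro x hx
      obtain ⟨J, hJ, hxJ⟩ := hx
      rw [hT.child_cover J (hRT hJ)] at hxJ
      obtain ⟨K, hK, hxK⟩ := hxJ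
      exact ⟨K, (memA K).mpr ⟨J, hJ, hK⟩, hxK⟩
  obtain ⟨G, hGA, hGle, hGgt⟩ := exists_greedy μ A hAc (t - ∑' J : F, μ (J : Set X))
  have hFGdis : Disjoint F G := by
    rw [Set.disjoint_left]
    intro L hLF hLG
    have h1 : Disjoint L L := hFA L hLF L (hGA hLG)
    have h2 : L = ∅ := by simpa using h1
    have := hT.pos L (hFT hLF)
    rw [h2] at this
    simp at this
  have hsumU : (∑' J : ↥(F ∪ G), μ (J : Set X)) =
      (∑' J : F, μ (J : Set X)) + ∑' J : G, μ (J : Set X) :=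
    ENNReal.summable.tsum_union_disjoint hFGdis ENNReal.summable
  have hcross : ∀ L ∈ F ∪ G, ∀ J ∈ A \ G, Disjoint L J := by
    intro L hL J hJ
    rcases hL with hL | hL
    · exact hFA L hL J hJ.1
    · have hne : L ≠ J := fun hLJ => hJ.2 (hLJ ▸ hL)
      exact hAp (hGA hL) hJ.1 hne
  refine ⟨(F ∪ G, A \ G), ⟨?_, ?_, ?_, ?_, ?_, ?_, ?_, ?_, ?_, ?_, ?_, ?_, ?_⟩,
    subset_union_left⟩
  · exact union_subset hFT (hGA.trans hAT)
  · exact (diff_subset).trans hAT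
  · exact hFc.union (hAc.mono hGA)
  · exact hAc.mono diff_subset
  · intro J hJ
    rcases hJ with hJ | hJ
    · exact hFI J hJ
    · exact hAI J (hGA hJ)
  · exact fun J hJ => hAI J (diff_subset hJ)
  · -- (F ∪ G).Pairwise Disjoint
    rw [Set.pairwise_union_of_symm]
    exact ⟨hFp, hAp.mono hGA, fun L hL K hK _ => hFA L hL K (hGA hK)⟩
  · exact hAp.mono diff_subset
  · exact hcross
  · -- A \ G ⊆ genFrom C I (m+1)
    intro K hK
    obtain ⟨J, hJ, hKJ⟩ := (memA K).mp hK.1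
    show K ∈ ⋃ J ∈ genFrom C I m, C J
    exact mem_iUnion₂.mpr ⟨J, hRg hJ, hKJ⟩
  · -- sum ≤ t
    rw [hsumU]
    calc (∑' J : F, μ (J : Set X)) + ∑' J : G, μ (J : Set X)
        ≤ (∑' J : F, μ (J : Set X)) + (t - ∑' J : F, μ (J : Set X)) :=
          add_le_add_right hGle _
      _ = t := add_tsub_cancel_of_le hFle
  · -- measure identity
    have hGmeas : ∀ K ∈ G, MeasurableSet K := fun K hK => hT.measurableSet K (hAT (hGA hK))
    have hR'meas : MeasurableSet (⋃₀ (A \ G)) :=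
      MeasurableSet.sUnion (hAc.mono diff_subset)
        fun K hK => hT.measurableSet K (hAT hK.1)
    have hdisj : Disjoint (⋃₀ G) (⋃₀ (A \ G)) := by
      rw [Set.disjoint_sUnion_left]
      intro s hs
      rw [Set.disjoint_sUnion_right]
      intro u hu
      have hne : s ≠ u := fun h => hu.2 (h ▸ hs)
      exact hAp (hGA hs) hu.1 hne
    have hG : μ (⋃₀ G) = ∑' J : G, μ (J : Set X) :=
      measure_sUnion (hAc.mono hGA) (hAp.mono hGA)
        fun K hK => hT.measurableSet K (hAT (hGA hK))
    have hsplit : μ (⋃₀ A) = μ (⋃₀ G) + μ (⋃₀ (A \ G)) := by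
      rw [← measure_union hdisj hR'meas, ← Set.sUnion_union,
        Set.union_diff_cancel hGA]
    rw [hsumU]
    calc (∑' J : F, μ (J : Set X)) + (∑' J : G, μ (J : Set X)) + μ (⋃₀ (A \ G))
        = (∑' J : F, μ (J : Set X)) + (μ (⋃₀ G) + μ (⋃₀ (A \ G))) := by
          rw [hG]; ring
      _ = (∑' J : F, μ (J : Set X)) + μ (⋃₀ A) := by rw [← hsplit]
      _ = (∑' J : F, μ (J : Set X)) + μ (⋃₀ R) := by rw [hUA]
      _ = μ I := hFeq
  · -- maximality
    intro _ J hJ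
    have hb := hGgt J hJ
    have : t = (∑' J : F, μ (J : Set X)) + (t - ∑' J : F, μ (J : Set X)) :=
      (add_tsub_cancel_of_le hFle).symm
    rw [this]
    calc (∑' J : F, μ (J : Set X)) + (t - ∑' J : F, μ (J : Set X))
        < (∑' J : F, μ (J : Set X)) + ((∑' J : G, μ (J : Set X)) + μ J) :=
          ENNReal.add_lt_add_left hFne hb
      _ = (∑' J : ↥(F ∪ G), μ (J : Set X)) + μ J := by rw [hsumU]; ring

lemma msum_iUnion_le {X : Type*} [MeasurableSpace X] (μ : Measure X)
    (f : ℕ → Set (Set X)) (hmono : Monotone f) (c : ℝ≥0∞)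
    (h : ∀ m, (∑' J : f m, μ (J : Set X)) ≤ c) :
    (∑' J : (⋃ m, f m), μ (J : Set X)) ≤ c := by
  classical
  rw [tsum_subtype]
  refine Summable.tsum_le_of_sum_le ENNReal.summable ?_
  intro s
  have hex : ∃ N, ∀ J ∈ s, J ∈ (⋃ m, f m) → J ∈ f N := by
    induction s using Finset.induction_on with
    | empty => exact ⟨0, by simp⟩
    | @insert a s ha ih =>
      obtain ⟨N, hN⟩ := ih
      by_cases hmem : a ∈ ⋃ m, f m
      · obtain ⟨M, hM⟩ := mem_iUnion.mp hmem
        refine ⟨max N M, fun J hJ hJU => ?_⟩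
        rcases Finset.mem_insert.mp hJ with rfl | hJ
        · exact hmono (le_max_right N M) hM
        · exact hmono (le_max_left N M) (hN J hJ hJU)
      · refine ⟨N, fun J hJ hJU => ?_⟩
        rcases Finset.mem_insert.mp hJ with rfl | hJ
        · exact absurd hJU hmem
        · exact hN J hJ hJU
  obtain ⟨N, hN⟩ := hex
  calc ∑ J ∈ s, (⋃ m, f m).indicator (fun K => μ K) J
      ≤ ∑ J ∈ s, (f N).indicator (fun K => μ K) J := by
        refine Finset.sum_le_sum fun J hJ => ?_
        by_cases hJU : J ∈ ⋃ m, f m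
        · rw [Set.indicator_of_mem hJU, Set.indicator_of_mem (hN J hJ hJU)]
        · rw [Set.indicator_of_notMem hJU]; exact zero_le
    _ ≤ ∑' J, (f N).indicator (fun K => μ K) J := ENNReal.sum_le_tsum _
    _ = ∑' J : f N, μ (J : Set X) := (tsum_subtype _ _).symm
    _ ≤ c := h N


/-- Lemma 2.1, splitting off measure `(1-a) μ(I)` inside a tree element. -/
theorem statement3 {X : Type*} [MeasurableSpace X] (μ : Measure X)
    [IsProbabilityMeasure μ] [NullSingletonClass μ]
    (T : Set (Set X)) (C : Set X → Set (Set X)) (hT : IsTree μ T C)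
    (I : Set X) (hI : I ∈ T) (a : ℝ) (ha0 : 0 < a) (ha1 : a < 1) :
    ∃ F : Set (Set X), F ⊆ T ∧ F.Countable ∧ (∀ J ∈ F, J ⊆ I) ∧
      F.Pairwise (fun J K => Disjoint J K) ∧
      μ (⋃₀ F) = ENNReal.ofReal (1 - a) * μ I ∧
      (∑' J : F, μ (J : Set X)) = ENNReal.ofReal (1 - a) * μ I := by
  classical
  set t := ENNReal.ofReal (1 - a) * μ I with htdef
  have hμI0 : μ I ≠ 0 := (hT.pos I hI).ne'
  have hμIne : μ I ≠ ⊤ := measure_ne_top μ I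
  have htlt : t < μ I := by
    have h1 : ENNReal.ofReal (1 - a) < 1 := by
      rw [← ENNReal.ofReal_one]
      exact (ENNReal.ofReal_lt_ofReal_iff (by norm_num)).mpr (by linarith)
    calc t < 1 * μ I := by
          rw [htdef]
          exact (ENNReal.mul_lt_mul_iff_left hμI0 hμIne).mpr h1
      _ = μ I := one_mul _
  have inv0 : SplitInv μ T C I t 0 ∅ {I} := by
    refine ⟨empty_subset _, singleton_subset_iff.mpr hI, countable_empty,
      countable_singleton _, by simp, by simp, pairwise_empty _,
      pairwise_singleton _ _, by simp, ?_, by simp, by simp, by simp⟩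
    · rw [show genFrom C I 0 = {I} from rfl]
  have key : ∀ m (p : {p : Set (Set X) × Set (Set X) // SplitInv μ T C I t m p.1 p.2}),
      ∃ q : Set (Set X) × Set (Set X), SplitInv μ T C I t (m+1) q.1 q.2 ∧ p.1.1 ⊆ q.1 :=
    fun m p => split_step μ T C hT I t htlt m p.2
  let f : ∀ m : ℕ, {p : Set (Set X) × Set (Set X) // SplitInv μ T C I t m p.1 p.2} :=
    fun m => Nat.rec ⟨(∅, {I}), inv0⟩
      (fun k p => ⟨(key k p).choose, (key k p).choose_spec.1⟩) m
  set Fm : ℕ → Set (Set X) := fun m => (f m).1.1 with hFm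
  set Rm : ℕ → Set (Set X) := fun m => (f m).1.2 with hRm
  have hinv : ∀ m, SplitInv μ T C I t m (Fm m) (Rm m) := fun m => (f m).2
  have hsub : ∀ m, Fm m ⊆ Fm (m+1) := fun m => (key m (f m)).choose_spec.2
  have hmono : Monotone Fm := monotone_nat_of_le_succ hsub
  set Fs : Set (Set X) := ⋃ m, Fm m with hFs
  have hFsT : Fs ⊆ T := iUnion_subset fun m => (hinv m).1
  have hFsc : Fs.Countable := countable_iUnion fun m => (hinv m).2.2.1
  have hFsI : ∀ J ∈ Fs, J ⊆ I := by
    intro J hJ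
    obtain ⟨m, hm⟩ := mem_iUnion.mp hJ
    exact (hinv m).2.2.2.2.1 J hm
  have hFsp : Fs.Pairwise (fun J K => Disjoint J K) := by
    intro J hJ K hK hne
    obtain ⟨m1, hm1⟩ := mem_iUnion.mp hJ
    obtain ⟨m2, hm2⟩ := mem_iUnion.mp hK
    exact (hinv (max m1 m2)).2.2.2.2.2.2.1
      (hmono (le_max_left m1 m2) hm1) (hmono (le_max_right m1 m2) hm2) hne
  have hFmle : ∀ m, (∑' J : Fm m, μ (J : Set X)) ≤ t := fun m =>
    (hinv m).2.2.2.2.2.2.2.2.2.2.1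
  have hup : (∑' J : Fs, μ (J : Set X)) ≤ t := msum_iUnion_le μ Fm hmono t hFmle
  -- lower bound
  obtain ⟨m0, hm0⟩ : ∃ m0, I ∈ treeGen C m0 := by
    have := hI
    rw [hT.eq_gen] at this
    exact mem_iUnion.mp this
  have hlow : ∀ m, 1 ≤ m →
      t ≤ (∑' J : Fs, μ (J : Set X)) + ⨆ L ∈ treeGen C (m0 + m), μ L := by
    intro m hm
    have hRne : (Rm m).Nonempty := by
      rcases (Rm m).eq_empty_or_nonempty with he | hne
      · exfalso
        have h5 := (hinv m).2.2.2.2.2.2.2.2.2.2.2.1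
        rw [he] at h5
        simp at h5
        exact absurd (h5 ▸ hFmle m) (not_le.mpr htlt)
      · exact hne
    obtain ⟨J, hJ⟩ := hRne
    have hmax := (hinv m).2.2.2.2.2.2.2.2.2.2.2.2 hm J hJ
    have hJg : J ∈ treeGen C (m0 + m) :=
      genFrom_subset_treeGen C I m0 hm0 m ((hinv m).2.2.2.2.2.2.2.2.2.1 hJ)
    have hμJ : μ J ≤ ⨆ L ∈ treeGen C (m0 + m), μ L := le_biSup _ hJg
    have hFmFs : (∑' J : Fm m, μ (J : Set X)) ≤ ∑' J : Fs, μ (J : Set X) :=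
      ENNReal.tsum_mono_subtype _ (subset_iUnion Fm m)
    exact le_of_lt (hmax.trans_le (add_le_add hFmFs hμJ))
  have hlowfin : t ≤ ∑' J : Fs, μ (J : Set X) := by
    refine ENNReal.le_of_forall_pos_le_add ?_
    intro ε hε hfin
    have hev : ∀ᶠ m in Filter.atTop, (⨆ L ∈ treeGen C m, μ L) < (ε : ℝ≥0∞) := by
      refine hT.gen_small.eventually_lt_const ?_
      exact_mod_cast hε.bot_lt
    obtain ⟨N, hN⟩ := Filter.eventually_atTop.mp hev
    have := hlow (N + 1) (Nat.le_add_left 1 N)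
    refine this.trans (add_le_add_right ?_ _)
    exact (hN (m0 + (N + 1)) (by omega)).le
  have hsum : (∑' J : Fs, μ (J : Set X)) = t := le_antisymm hup hlowfin
  have hmeas : μ (⋃₀ Fs) = ∑' J : Fs, μ (J : Set X) :=
    measure_sUnion hFsc hFsp fun K hK => hT.measurableSet K (hFsT hK)
  exact ⟨Fs, hFsT, hFsc, hFsI, hFsp, by rw [hmeas, hsum], hsum⟩
end

section
/- Let p > 1 and let f, F, L be real numbers with 0 < f, f^p ≤ F, f ≤ L and L < (p/(p−1)) f. Then there exists a non-increasing continuous function g : (0,1] → [0,∞) with ∫₀¹ g(u) du = f and ∫₀¹ g(u)^p du = F such that ∫₀¹ max( (1/t) ∫₀^t g(u) du, L )^p dt = F · [ω_p( (p L^{p−1} f − (p−1) L^p)/F )]^p. -/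
open MeasureTheory Set
open scoped ENNReal NNReal

lemma Hfun_strictAntiOn {p : ℝ} (hp : 1 < p) : StrictAntiOn (Hfun p) (Icc 1 (p/(p-1))) := by
  have hp0 : (0:ℝ) < p := by linarith
  have hp1 : (0:ℝ) < p - 1 := by linarith
  apply strictAntiOn_of_deriv_neg (convex_Icc _ _)
  · have : ContinuousOn (fun z : ℝ => -(p-1) * z ^ p + p * z ^ (p-1)) (Icc 1 (p/(p-1))) :=
      (continuousOn_const.mul (continuousOn_id.rpow_const (fun x _ => Or.inr hp0.le))).add
        (continuousOn_const.mul (continuousOn_id.rpow_const (fun x _ => Or.inr (by linarith))))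
    exact this
  · intro x hx
    rw [interior_Icc] at hx
    have hx1 : (1:ℝ) < x := hx.1
    have hx0 : (0:ℝ) < x := by linarith
    have h1 : HasDerivAt (fun z : ℝ => z ^ p) (p * x ^ (p-1)) x :=
      Real.hasDerivAt_rpow_const (Or.inl hx0.ne')
    have h2 : HasDerivAt (fun z : ℝ => z ^ (p-1)) ((p-1) * x ^ (p-1-1)) x :=
      Real.hasDerivAt_rpow_const (Or.inl hx0.ne')
    have hd : HasDerivAt (Hfun p)
        (-(p-1) * (p * x ^ (p-1)) + p * ((p-1) * x ^ (p-1-1))) x :=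
      (h1.const_mul (-(p-1))).add (h2.const_mul p)
    rw [hd.deriv]
    have hlt : x ^ (p-1-1) < x ^ (p-1) :=
      (Real.rpow_lt_rpow_left_iff hx1).mpr (by linarith)
    have key : p*(p-1)*x^(p-1-1) < p*(p-1)*x^(p-1) :=
      mul_lt_mul_of_pos_left hlt (mul_pos hp0 hp1)
    nlinarith [key]

lemma omegaFun_eq {p z : ℝ} (hp : 1 < p) (hz1 : 1 ≤ z) (hz2 : z ≤ p/(p-1)) :
    omegaFun p (Hfun p z) = z := by
  have hanti := Hfun_strictAntiOn hp
  have hset : {w : ℝ | w ∈ Icc 1 (p/(p-1)) ∧ Hfun p w = Hfun p z} = {z} := by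
    ext w
    simp only [mem_setOf_eq, mem_singleton_iff]
    constructor
    · rintro ⟨hw, he⟩; exact hanti.injOn hw ⟨hz1, hz2⟩ he
    · rintro rfl; exact ⟨⟨hz1, hz2⟩, rfl⟩
  rw [omegaFun, hset, csSup_singleton]

lemma pieceInt {τ C₁ C₂ r : ℝ} (hr : (-1:ℝ) < r) (hτ0 : 0 ≤ τ) (hτ1 : τ ≤ 1) {h : ℝ → ℝ}
    (h1 : ∀ u ∈ Ioc (0:ℝ) τ, h u = C₁ * u ^ r) (h2 : ∀ u ∈ Ioc τ (1:ℝ), h u = C₂) :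
    ∫ u in Ioc (0:ℝ) 1, h u = C₁ * τ ^ (r+1) / (r+1) + C₂ * (1-τ) := by
  have hr1 : (0:ℝ) < r + 1 := by linarith
  have hi1 : IntegrableOn (fun u : ℝ => C₁ * u ^ r) (Ioc 0 τ) volume :=
    (intervalIntegrable_iff_integrableOn_Ioc_of_le hτ0).mp
      ((intervalIntegral.intervalIntegrable_rpow' hr).const_mul C₁)
  have hi1' : IntegrableOn h (Ioc 0 τ) volume :=
    hi1.congr_fun (fun u hu => (h1 u hu).symm) measurableSet_Ioc
  have hi2' : IntegrableOn h (Ioc τ 1) volume := by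
    refine (integrableOn_const ?_).congr_fun
      (fun u hu => (h2 u hu).symm) measurableSet_Ioc
    exact measure_Ioc_lt_top.ne
  rw [← Ioc_union_Ioc_eq_Ioc hτ0 hτ1,
    setIntegral_union (Ioc_disjoint_Ioc_of_le le_rfl) measurableSet_Ioc hi1' hi2']
  have e1 : ∫ u in Ioc (0:ℝ) τ, h u = C₁ * τ ^ (r+1) / (r+1) := by
    rw [setIntegral_congr_fun measurableSet_Ioc h1,
      ← intervalIntegral.integral_of_le hτ0, intervalIntegral.integral_const_mul,
      integral_rpow (Or.inl hr), Real.zero_rpow hr1.ne']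
    ring
  have e2 : ∫ u in Ioc τ (1:ℝ), h u = C₂ * (1-τ) := by
    rw [setIntegral_congr_fun measurableSet_Ioc h2, setIntegral_const, smul_eq_mul,
      measureReal_def, Real.volume_Ioc, ENNReal.toReal_ofReal (by linarith)]
    ring
  rw [e1, e2]

set_option maxHeartbeats 1000000 in
theorem key (p f F L a τ : ℝ) (hp : 1 < p) (hL : 0 < L)
    (haq : (p-1)/p < a) (ha1 : a ≤ 1) (hτ0 : 0 ≤ τ) (hτ1 : τ ≤ 1)
    (hf : L*τ + a*L*(1-τ) = f)
    (hF : (a*L)^p * (τ/(p*a-p+1) + (1-τ)) = F) :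
    ∃ g : ℝ → ℝ, ContinuousOn g (Set.Ioc 0 1) ∧ AntitoneOn g (Set.Ioc 0 1) ∧
      (∀ t ∈ Set.Ioc (0:ℝ) 1, 0 ≤ g t) ∧
      (∫ u in Set.Ioc (0:ℝ) 1, g u) = f ∧ (∫ u in Set.Ioc (0:ℝ) 1, g u ^ p) = F ∧
      (∫ t in Set.Ioc (0:ℝ) 1, (max ((∫ u in Set.Ioc (0:ℝ) t, g u) / t) L) ^ p) =
        F * (omegaFun p ((p * L ^ (p - 1) * f - (p - 1) * L ^ p) / F)) ^ p := by
  have hp0 : (0:ℝ) < p := by linarith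
  have ha0 : (0:ℝ) < a := lt_of_le_of_lt (div_nonneg (by linarith) hp0.le) haq
  have hpa : p - 1 < p * a := by
    have := (div_lt_iff₀ hp0).mp haq; nlinarith
  have hq : (0:ℝ) < p*a - p + 1 := by linarith
  have hq1 : p*a - p + 1 ≤ 1 := by nlinarith
  have h1a : (0:ℝ) ≤ 1 - a := by linarith
  have hra : (-1:ℝ) < a - 1 := by linarith
  have hrap : (-1:ℝ) < (a-1)*p := by nlinarith
  have hap : (0:ℝ) < a ^ p := Real.rpow_pos_of_pos ha0 p
  have hLp : (0:ℝ) < L ^ p := Real.rpow_pos_of_pos hL p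
  have e1 : ((1:ℝ)/a) ^ p = (a^p)⁻¹ := by rw [one_div, Real.inv_rpow ha0.le]
  have e4 : (a*L) ^ p = a^p * L^p := Real.mul_rpow ha0.le hL.le
  have hτsum' : τ ^ (1-a) * τ ^ a = τ := by
    rw [← Real.rpow_add' hτ0 (show (1-a) + a ≠ 0 by norm_num)]
    norm_num
  have hτsump : τ ^ ((1-a)*p) * τ ^ ((a-1)*p+1) = τ := by
    rw [← Real.rpow_add' hτ0 (show (1-a)*p + ((a-1)*p+1) ≠ 0 by
      rw [show (1-a)*p + ((a-1)*p+1) = (1:ℝ) by ring]; norm_num)]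
    rw [show (1-a)*p + ((a-1)*p+1) = (1:ℝ) by ring, Real.rpow_one]
  have hF0 : (0:ℝ) < F := by
    rw [← hF]
    have h5 : τ ≤ τ/(p*a-p+1) := by rw [le_div_iff₀ hq]; nlinarith
    have h6 : (0:ℝ) < (a*L)^p := Real.rpow_pos_of_pos (by positivity) p
    nlinarith
  -- value lemmas for g
  have gval1 : ∀ u ∈ Ioc (0:ℝ) τ,
      a*L*(max (τ/u) 1)^(1-a) = (a*L*τ^(1-a)) * u^(a-1) := by
    intro u hu
    have hu0 : (0:ℝ) < u := hu.1
    have h1 : (1:ℝ) ≤ τ/u := (one_le_div hu0).mpr hu.2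
    rw [max_eq_left h1, Real.div_rpow hτ0 hu0.le,
      show a - 1 = -(1-a) by ring, Real.rpow_neg hu0.le]
    ring
  have gval2 : ∀ u : ℝ, τ < u → a*L*(max (τ/u) 1)^(1-a) = a*L := by
    intro u hu
    have hu0 : (0:ℝ) < u := lt_of_le_of_lt hτ0 hu
    rw [max_eq_right ((div_lt_one hu0).mpr hu).le, Real.one_rpow, mul_one]
  -- integral of g over initial segments
  have powInt : ∀ c : ℝ, 0 < c → c ≤ τ →
      (∫ u in Ioc (0:ℝ) c, a*L*(max (τ/u) 1)^(1-a)) = L * τ^(1-a) * c^a := by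
    intro c hc hcτ
    have hsub : ∀ u ∈ Ioc (0:ℝ) c, a*L*(max (τ/u) 1)^(1-a) = (a*L*τ^(1-a)) * u^(a-1) :=
      fun u hu => gval1 u ⟨hu.1, hu.2.trans hcτ⟩
    rw [setIntegral_congr_fun measurableSet_Ioc hsub, ← intervalIntegral.integral_of_le hc.le,
      intervalIntegral.integral_const_mul, integral_rpow (Or.inl hra),
      Real.zero_rpow (show (a-1)+1 ≠ 0 by intro h; exact ha0.ne' (by linarith)), sub_zero,
      show (a-1)+1 = a by ring]
    field_simp
  have Aτval : (∫ u in Ioc (0:ℝ) τ, a*L*(max (τ/u) 1)^(1-a)) = L * τ := by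
    rcases eq_or_lt_of_le hτ0 with h0 | h0
    · rw [← h0]; simp
    · rw [powInt τ h0 le_rfl, mul_assoc, hτsum']
  have hgint1 : IntegrableOn (fun u => a*L*(max (τ/u) 1)^(1-a)) (Ioc 0 τ) volume := by
    refine (((intervalIntegral.intervalIntegrable_rpow' hra).const_mul
      (a*L*τ^(1-a))) |> (intervalIntegrable_iff_integrableOn_Ioc_of_le hτ0).mp).congr_fun
      (fun u hu => (gval1 u hu).symm) measurableSet_Ioc
  have hgint2 : ∀ t : ℝ, IntegrableOn (fun u => a*L*(max (τ/u) 1)^(1-a)) (Ioc τ t) volume := by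
    intro t
    refine (integrableOn_const measure_Ioc_lt_top.ne).congr_fun
      (fun u hu => (gval2 u hu.1).symm) measurableSet_Ioc
  -- the three main integrals
  refine ⟨fun t => a*L*(max (τ/t) 1)^(1-a), ?_, ?_, ?_, ?_, ?_, ?_⟩
  · apply continuousOn_const.mul
    apply ContinuousOn.rpow_const
    · exact (continuousOn_const.div continuousOn_id (fun x hx => ne_of_gt hx.1)).sup
        continuousOn_const
    · exact fun x _ => Or.inr h1a
  · intro s hs t ht hst
    have h1 : τ/t ≤ τ/s := by
      apply div_le_div_of_nonneg_left hτ0 hs.1 hst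
    refine mul_le_mul_of_nonneg_left ?_ (by positivity)
    exact Real.rpow_le_rpow (le_trans zero_le_one (le_max_right _ _))
      (max_le_max h1 le_rfl) h1a
  · intro t ht
    have : (0:ℝ) ≤ (max (τ/t) 1)^(1-a) :=
      Real.rpow_nonneg (le_trans zero_le_one (le_max_right _ _)) _
    positivity
  · -- ∫ g = f
    rw [pieceInt hra hτ0 hτ1 gval1 (fun u hu => gval2 u hu.1), ← hf,
      show (a-1)+1 = a by ring, mul_assoc, hτsum']
    field_simp
  · -- ∫ g^p = F
    have gvalp1 : ∀ u ∈ Ioc (0:ℝ) τ,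
        (a*L*(max (τ/u) 1)^(1-a))^p = ((a*L)^p * τ^((1-a)*p)) * u^((a-1)*p) := by
      intro u hu
      rw [gval1 u hu,
        Real.mul_rpow (by positivity) (Real.rpow_nonneg hu.1.le _),
        Real.mul_rpow (by positivity) (Real.rpow_nonneg hτ0 _),
        ← Real.rpow_mul hτ0, ← Real.rpow_mul hu.1.le]
    have gvalp2 : ∀ u ∈ Ioc τ (1:ℝ), (a*L*(max (τ/u) 1)^(1-a))^p = (a*L)^p := by
      intro u hu; rw [gval2 u hu.1]
    rw [pieceInt hrap hτ0 hτ1 gvalp1 gvalp2, ← hF, mul_assoc, hτsump,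
      show (a-1)*p+1 = p*a-p+1 by ring]
    ring
  · -- the maximal integral
    have hM1 : ∀ t ∈ Ioc (0:ℝ) τ,
        (max ((∫ u in Ioc (0:ℝ) t, a*L*(max (τ/u) 1)^(1-a)) / t) L)^p
          = (L^p * τ^((1-a)*p)) * t^((a-1)*p) := by
      intro t ht
      have ht0 : (0:ℝ) < t := ht.1
      rw [powInt t ht0 ht.2]
      have et : (t:ℝ)^a = t^(a-1)*t := by
        rw [show a = (a-1)+1 by ring, Real.rpow_add ht0, Real.rpow_one]
        ring_nf
      have hAt : L * τ^(1-a) * t^a / t = L * (τ^(1-a) * t^(a-1)) := by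
        rw [et]; field_simp
      rw [hAt]
      have h1 : t^(1-a) * t^(a-1) = 1 := by
        rw [← Real.rpow_add ht0, show (1-a)+(a-1) = (0:ℝ) by ring, Real.rpow_zero]
      have h2 : t^(1-a) ≤ τ^(1-a) := Real.rpow_le_rpow ht0.le ht.2 h1a
      have h3 : (0:ℝ) < t^(a-1) := Real.rpow_pos_of_pos ht0 _
      have h4 : (1:ℝ) ≤ τ^(1-a) * t^(a-1) := by
        nlinarith [mul_le_mul_of_nonneg_right h2 h3.le]
      have hge : L ≤ L * (τ^(1-a) * t^(a-1)) := by nlinarith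
      rw [max_eq_left hge,
        Real.mul_rpow hL.le (by positivity),
        Real.mul_rpow (Real.rpow_nonneg hτ0 _) (Real.rpow_nonneg ht0.le _),
        ← Real.rpow_mul hτ0, ← Real.rpow_mul ht0.le]
      ring
    have hM2 : ∀ t ∈ Ioc τ (1:ℝ),
        (max ((∫ u in Ioc (0:ℝ) t, a*L*(max (τ/u) 1)^(1-a)) / t) L)^p = L^p := by
      intro t ht
      have ht0 : (0:ℝ) < t := lt_of_le_of_lt hτ0 ht.1
      have hsplit : (∫ u in Ioc (0:ℝ) t, a*L*(max (τ/u) 1)^(1-a)) = L*τ + a*L*(t-τ) := by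
        rw [← Ioc_union_Ioc_eq_Ioc hτ0 ht.1.le,
          setIntegral_union (Ioc_disjoint_Ioc_of_le le_rfl) measurableSet_Ioc hgint1 (hgint2 t),
          Aτval, setIntegral_congr_fun measurableSet_Ioc (fun u hu => gval2 u hu.1),
          setIntegral_const, smul_eq_mul, measureReal_def, Real.volume_Ioc,
          ENNReal.toReal_ofReal (by linarith [ht.1.le] : (0:ℝ) ≤ t - τ)]
        ring
      rw [hsplit]
      have hle : (L*τ + a*L*(t-τ))/t ≤ L := by
        rw [div_le_iff₀ ht0]
        nlinarith [mul_nonneg (mul_nonneg h1a hL.le) (sub_nonneg.mpr ht.1.le)]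
      rw [max_eq_right hle]
    rw [pieceInt hrap hτ0 hτ1 hM1 hM2]
    -- compute omega
    have h1a' : (1:ℝ) ≤ 1/a := by rw [le_div_iff₀ ha0]; linarith
    have h2a' : (1:ℝ)/a ≤ p/(p-1) := by
      rw [div_le_div_iff₀ ha0 (by linarith)]; nlinarith
    have hb : (p * L ^ (p - 1) * f - (p - 1) * L ^ p) / F = Hfun p (1/a) := by
      rw [div_eq_iff hF0.ne', ← hf, ← hF]
      have e2 : ((1:ℝ)/a)^(p-1) = a * (a^p)⁻¹ := by
        rw [Real.rpow_sub (by positivity : (0:ℝ) < 1/a), Real.rpow_one, e1]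
        field_simp
      have e3 : L^(p-1) = L^p / L := by
        rw [show p - 1 = p - (1:ℝ) by norm_num, Real.rpow_sub hL, Real.rpow_one]
      simp only [Hfun]
      rw [e1, e2, e3, e4]
      have hq' : p*a-p+1 ≠ 0 := hq.ne'
      field_simp
      have hq'' : p*(a-1)+1 ≠ 0 := by intro h; apply hq'; linarith
      rw [show (-(p-1)+p*a) = p*(a-1)+1 by ring, mul_add (p*(a-1)+1), mul_div_cancel₀ _ hq'']
      ring
    rw [hb, omegaFun_eq hp h1a' h2a', ← hF, e4, e1, mul_assoc (L^p), hτsump,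
      show (a-1)*p+1 = p*a-p+1 by ring]
    field_simp


set_option maxHeartbeats 1000000 in
/-- sharpness in the case `L < (p/(p-1)) f`. -/
theorem statement11 (p f F L : ℝ) (hp : 1 < p) (hf : 0 < f) (hfF : f ^ p ≤ F)
    (hfL : f ≤ L) (hL : L < p / (p - 1) * f) :
    ∃ g : ℝ → ℝ, ContinuousOn g (Set.Ioc 0 1) ∧ AntitoneOn g (Set.Ioc 0 1) ∧
      (∀ t ∈ Set.Ioc (0:ℝ) 1, 0 ≤ g t) ∧
      (∫ u in Set.Ioc (0:ℝ) 1, g u) = f ∧ (∫ u in Set.Ioc (0:ℝ) 1, g u ^ p) = F ∧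
      (∫ t in Set.Ioc (0:ℝ) 1, (max ((∫ u in Set.Ioc (0:ℝ) t, g u) / t) L) ^ p) =
        F * (omegaFun p ((p * L ^ (p - 1) * f - (p - 1) * L ^ p) / F)) ^ p := by
  have hp0 : (0:ℝ) < p := by linarith
  have hp1 : (0:ℝ) < p - 1 := by linarith
  have hL0 : (0:ℝ) < L := lt_of_lt_of_le hf hfL
  have hr1 : (p-1)/p < 1 := by rw [div_lt_one hp0]; linarith
  have hr0 : (0:ℝ) < (p-1)/p := div_pos hp1 hp0
  have hpfL : (p-1) * L < p * f := by
    have h := mul_lt_mul_of_pos_right hL hp1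
    rw [show p/(p-1)*f*(p-1) = p*f by field_simp] at h
    nlinarith
  have hrLp : (0:ℝ) < ((p-1)/p*L)^p := Real.rpow_pos_of_pos (mul_pos hr0 hL0) p
  -- tendsto lemmas shared
  have T1 : Filter.Tendsto (fun a : ℝ => (a*L)^p) (nhdsWithin ((p-1)/p) (Ioi ((p-1)/p)))
      (nhds (((p-1)/p*L)^p)) := by
    have c1 : ContinuousAt (fun a : ℝ => (a*L)^p) ((p-1)/p) :=
      ContinuousAt.rpow_const (by fun_prop) (Or.inr hp0.le)
    exact c1.tendsto.mono_left nhdsWithin_le_nhds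
  have T3 : Filter.Tendsto (fun a : ℝ => p*a-p+1) (nhdsWithin ((p-1)/p) (Ioi ((p-1)/p)))
      (nhdsWithin 0 (Ioi 0)) := by
    rw [tendsto_nhdsWithin_iff]
    constructor
    · have hqr : p*((p-1)/p)-p+1 = 0 := by field_simp; ring
      have c3 : ContinuousAt (fun a : ℝ => p*a-p+1) ((p-1)/p) := by fun_prop
      have := c3.tendsto.mono_left
        (nhdsWithin_le_nhds : nhdsWithin ((p-1)/p) (Ioi ((p-1)/p)) ≤ _)
      rwa [hqr] at this
    · refine Filter.eventually_mem_set.mpr self_mem_nhdsWithin |>.mono ?_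
      intro a ha
      have : (p-1)/p < a := ha
      have : p - 1 < p * a := by
        have := mul_lt_mul_of_pos_left this hp0
        rw [mul_div_cancel₀ _ hp0.ne'] at this
        linarith
      exact mem_Ioi.mpr (by linarith)
  have T4 : Filter.Tendsto (fun a : ℝ => (p*a-p+1)⁻¹)
      (nhdsWithin ((p-1)/p) (Ioi ((p-1)/p))) Filter.atTop :=
    tendsto_inv_nhdsGT_zero.comp T3
  rcases eq_or_lt_of_le hfL with hfeqL | hfltL
  · -- case f = L : take τ = 1
    have T7 : Filter.Tendsto (fun a : ℝ => (a*L)^p * (p*a-p+1)⁻¹)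
        (nhdsWithin ((p-1)/p) (Ioi ((p-1)/p))) Filter.atTop :=
      Filter.Tendsto.pos_mul_atTop hrLp T1 T4
    obtain ⟨a₁, hge, ha₁⟩ := ((T7.eventually_ge_atTop F).and
      (Filter.eventually_mem_set.mpr (Ioo_mem_nhdsGT_of_mem ⟨le_rfl, hr1⟩))).exists
    have hc : ContinuousOn (fun a : ℝ => (a*L)^p * (p*a-p+1)⁻¹) (Icc a₁ 1) := by
      refine ContinuousOn.mul (ContinuousOn.rpow_const (by fun_prop)
        (fun x _ => Or.inr hp0.le)) (ContinuousOn.inv₀ (by fun_prop) ?_)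
      intro x hx
      have : (p-1)/p < x := lt_of_lt_of_le ha₁.1 hx.1
      have : p - 1 < p * x := by
        have := mul_lt_mul_of_pos_left this hp0
        rw [mul_div_cancel₀ _ hp0.ne'] at this
        linarith
      exact ne_of_gt (by linarith)
    have hψ1 : ((1:ℝ)*L)^p * (p*1-p+1)⁻¹ = L^p := by norm_num
    have hsub := intermediate_value_Icc' ha₁.2.le hc
    have hmemF : F ∈ Icc (((1:ℝ)*L)^p * (p*1-p+1)⁻¹) ((a₁*L)^p * (p*a₁-p+1)⁻¹) := by
      rw [hψ1]
      exact ⟨by rw [← hfeqL]; exact hfF, hge⟩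
    obtain ⟨a, hmem, hψa⟩ := hsub hmemF
    refine key p f F L a 1 hp hL0 (lt_of_lt_of_le ha₁.1 hmem.1) hmem.2 zero_le_one le_rfl
      ?_ ?_
    · rw [hfeqL]; ring
    · rw [← hψa]; ring
  · -- case f < L
    have hfL1 : f/L < 1 := (div_lt_one hL0).mpr hfltL
    have hrfL : (p-1)/p < f/L := by
      rw [div_lt_div_iff₀ hp0 hL0]; nlinarith
    have hτr0 : (0:ℝ) < (f - (p-1)/p*L)/(L*(1-(p-1)/p)) := by
      apply div_pos
      · rw [sub_pos, div_mul_eq_mul_div, div_lt_iff₀ hp0]; nlinarith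
      · apply mul_pos hL0; linarith
    have T2 : Filter.Tendsto (fun a : ℝ => (f - a*L)/(L*(1-a)))
        (nhdsWithin ((p-1)/p) (Ioi ((p-1)/p)))
        (nhds ((f - (p-1)/p*L)/(L*(1-(p-1)/p)))) := by
      have c2 : ContinuousAt (fun a : ℝ => (f - a*L)/(L*(1-a))) ((p-1)/p) := by
        apply ContinuousAt.div (by fun_prop) (by fun_prop)
        have : (0:ℝ) < L*(1-(p-1)/p) := mul_pos hL0 (by linarith)
        exact ne_of_gt this
      exact c2.tendsto.mono_left nhdsWithin_le_nhds
    have T4' : Filter.Tendsto (fun a : ℝ => (p*a-p+1)⁻¹ - 1)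
        (nhdsWithin ((p-1)/p) (Ioi ((p-1)/p))) Filter.atTop := by
      simpa [sub_eq_add_neg] using Filter.tendsto_atTop_add_const_right _ (-1 : ℝ) T4
    have T5 := Filter.Tendsto.pos_mul_atTop hτr0 T2 T4'
    have T6 := Filter.tendsto_atTop_add_const_right _ (1:ℝ) T5
    have T7 : Filter.Tendsto
        (fun a : ℝ => (a*L)^p * ((f - a*L)/(L*(1-a)) * ((p*a-p+1)⁻¹ - 1) + 1))
        (nhdsWithin ((p-1)/p) (Ioi ((p-1)/p))) Filter.atTop :=
      Filter.Tendsto.pos_mul_atTop hrLp T1 T6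
    obtain ⟨a₁, hge, ha₁⟩ := ((T7.eventually_ge_atTop F).and
      (Filter.eventually_mem_set.mpr (Ioo_mem_nhdsGT_of_mem ⟨le_rfl, hrfL⟩))).exists
    have hqpos : ∀ x ∈ Icc a₁ (f/L), (0:ℝ) < p*x-p+1 := by
      intro x hx
      have h1 : (p-1)/p < x := lt_of_lt_of_le ha₁.1 hx.1
      have : p - 1 < p * x := by
        have := mul_lt_mul_of_pos_left h1 hp0
        rw [mul_div_cancel₀ _ hp0.ne'] at this
        linarith
      linarith
    have hc : ContinuousOn
        (fun a : ℝ => (a*L)^p * ((f - a*L)/(L*(1-a)) * ((p*a-p+1)⁻¹ - 1) + 1))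
        (Icc a₁ (f/L)) := by
      have hden : ∀ x ∈ Icc a₁ (f/L), L*(1-x) ≠ 0 := by
        intro x hx
        have : x < 1 := lt_of_le_of_lt hx.2 hfL1
        exact ne_of_gt (mul_pos hL0 (by linarith))
      refine ContinuousOn.mul (ContinuousOn.rpow_const (by fun_prop)
        (fun x _ => Or.inr hp0.le)) ?_
      refine ContinuousOn.add (ContinuousOn.mul
        (ContinuousOn.div (by fun_prop) (by fun_prop) hden)
        (ContinuousOn.sub (ContinuousOn.inv₀ (by fun_prop)
          (fun x hx => ne_of_gt (hqpos x hx))) continuousOn_const)) continuousOn_const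
    have hsub := intermediate_value_Icc' ha₁.2.le hc
    have hΦR : ((f/L)*L)^p * ((f - (f/L)*L)/(L*(1-(f/L))) * ((p*(f/L)-p+1)⁻¹ - 1) + 1)
        = f^p := by
      rw [div_mul_cancel₀ f hL0.ne']
      simp
    have hmemF : F ∈ Icc
        (((f/L)*L)^p * ((f - (f/L)*L)/(L*(1-(f/L))) * ((p*(f/L)-p+1)⁻¹ - 1) + 1))
        ((a₁*L)^p * ((f - a₁*L)/(L*(1-a₁)) * ((p*a₁-p+1)⁻¹ - 1) + 1)) := by
      rw [hΦR]; exact ⟨hfF, hge⟩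
    obtain ⟨a, hmem, hΦa⟩ := hsub hmemF
    have haq : (p-1)/p < a := lt_of_lt_of_le ha₁.1 hmem.1
    have hane : a < 1 := lt_of_le_of_lt hmem.2 hfL1
    have ha1' : a ≤ 1 := hane.le
    have hden : (0:ℝ) < L*(1-a) := mul_pos hL0 (by linarith)
    have hnum : (0:ℝ) ≤ f - a*L := by
      have := (le_div_iff₀ hL0).mp hmem.2
      linarith
    refine key p f F L a ((f - a*L)/(L*(1-a))) hp hL0 haq ha1'
      (div_nonneg hnum hden.le) ?_ ?_ ?_
    · rw [div_le_one hden]; nlinarith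
    · have h1a0 : (1:ℝ) - a ≠ 0 := (sub_pos.mpr hane).ne'
      field_simp
      ring
    · rw [← hΦa]
      have hqa : p*a-p+1 ≠ 0 := ne_of_gt (hqpos a hmem)
      have h1a0 : (1:ℝ) - a ≠ 0 := (sub_pos.mpr hane).ne'
      have hqa' : p*(a-1)+1 ≠ 0 := by intro h; apply hqa; linarith
      field_simp
      ring
end

section
/- Let (X,μ) be a non-atomic probability space, T a tree on X, and M_T the associated dyadic maximal operator. Let p > 1, let φ : X → [0,∞) be in L^p(X,μ) with ∫_X φ dμ = f, and let L ≥ f. Then ∫_X max(M_T φ, L)^p dμ ≤ L^p − (p/(p−1)) L^{p−1} f + (p/(p−1)) ∫_X φ · max(M_T φ, L)^{p−1} dμ. -/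
open MeasureTheory Set
open scoped ENNReal NNReal

section TreeAux

variable {X : Type*} [MeasurableSpace X] {μ : Measure X} {T : Set (Set X)}
  {C : Set X → Set (Set X)}

lemma treeGen_subset (hT : IsTree μ T C) : ∀ m, treeGen C m ⊆ T := by
  intro m
  induction m with
  | zero =>
    intro I hI
    simp only [treeGen, Set.mem_singleton_iff] at hI
    exact hI ▸ hT.univ_mem
  | succ m ih =>
    intro I hI
    simp only [treeGen, Set.mem_iUnion] at hI
    obtain ⟨J, hJ, hIJ⟩ := hI
    exact hT.child_sub_tree J (ih hJ) hIJ

lemma treeGen_countable (hT : IsTree μ T C) : ∀ m, (treeGen C m).Countable := by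
  intro m
  induction m with
  | zero => exact Set.countable_singleton _
  | succ m ih =>
    exact ih.biUnion fun I hI => hT.child_countable I (treeGen_subset hT m hI)

lemma tree_countable (hT : IsTree μ T C) : T.Countable := by
  rw [hT.eq_gen]
  exact Set.countable_iUnion (treeGen_countable hT)

lemma treeGen_disjoint (hT : IsTree μ T C) :
    ∀ m, (treeGen C m).Pairwise Disjoint := by
  intro m
  induction m with
  | zero =>
    simp only [treeGen]
    exact Set.pairwise_singleton _ _
  | succ m ih =>
    intro I hI J hJ hne
    simp only [treeGen, Set.mem_iUnion] at hI hJ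
    obtain ⟨I₀, hI₀, hIc⟩ := hI
    obtain ⟨J₀, hJ₀, hJc⟩ := hJ
    by_cases h : I₀ = J₀
    · subst h
      exact hT.child_disjoint I₀ (treeGen_subset hT m hI₀) I hIc J hJc hne
    · exact (ih hI₀ hJ₀ h).mono
        (hT.child_subset I₀ (treeGen_subset hT m hI₀) I hIc)
        (hT.child_subset J₀ (treeGen_subset hT m hJ₀) J hJc)

lemma treeGen_ancestor (hT : IsTree μ T C) :
    ∀ n m, m ≤ n → ∀ J ∈ treeGen C n, ∃ K ∈ treeGen C m, J ⊆ K := by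
  intro n
  induction n with
  | zero =>
    intro m hm J hJ
    rw [Nat.le_zero.mp hm]
    exact ⟨J, hJ, subset_rfl⟩
  | succ n ih =>
    intro m hm J hJ
    rcases Nat.lt_or_ge m (n+1) with h | h
    · simp only [treeGen, Set.mem_iUnion] at hJ
      obtain ⟨J₀, hJ₀, hJc⟩ := hJ
      obtain ⟨K, hK, hsub⟩ := ih m (Nat.lt_succ_iff.mp h) J₀ hJ₀
      exact ⟨K, hK, (hT.child_subset J₀ (treeGen_subset hT n hJ₀) J hJc).trans hsub⟩
    · exact ⟨J, (le_antisymm hm h) ▸ hJ, subset_rfl⟩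

lemma tree_gen_superset (hT : IsTree μ T C) {K J : Set X} {m₀ : ℕ}
    (hK : K ∈ treeGen C m₀) (hJ : J ∈ T) (hKJ : K ⊆ J) (hne : K.Nonempty) :
    J = K ∨ ∃ m, m ≤ m₀ ∧ J ∈ treeGen C m := by
  have hJ' := hJ
  rw [hT.eq_gen] at hJ'
  simp only [Set.mem_iUnion] at hJ'
  obtain ⟨m', hm'⟩ := hJ'
  rcases le_or_gt m' m₀ with h | h
  · exact Or.inr ⟨m', h, hm'⟩
  · obtain ⟨K', hK', hsub⟩ := treeGen_ancestor hT m' m₀ h.le J hm'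
    obtain ⟨x, hx⟩ := hne
    have hKK' : K = K' := by
      by_contra hne'
      exact Set.disjoint_left.mp (treeGen_disjoint hT m₀ hK hK' hne') hx
        (hsub (hKJ hx))
    exact Or.inl (Set.Subset.antisymm (hKK' ▸ hsub) hKJ)

lemma tree_exists_maximal (hT : IsTree μ T C) {F : Set (Set X)} (hF : F ⊆ T)
    {I : Set X} (hI : I ∈ F) :
    ∃ K ∈ F, I ⊆ K ∧ ∀ J ∈ F, K ⊆ J → J = K := by
  have hQ : ∃ m : ℕ, ∃ K, K ∈ treeGen C m ∧ K ∈ F ∧ I ⊆ K := by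
    have := hF hI
    rw [hT.eq_gen] at this
    simp only [Set.mem_iUnion] at this
    obtain ⟨n, hn⟩ := this
    exact ⟨n, I, hn, hI, subset_rfl⟩
  classical
  obtain ⟨K, hKgen, hKF, hIK⟩ := Nat.find_spec hQ
  refine ⟨K, hKF, hIK, fun J hJF hKJ => ?_⟩
  have hKne : K.Nonempty :=
    MeasureTheory.nonempty_of_measure_ne_zero (hT.pos K (hF hKF)).ne'
  rcases tree_gen_superset hT hKgen (hF hJF) hKJ hKne with h | ⟨m, hm, hJgen⟩
  · exact h
  · have hfind : Nat.find hQ ≤ m := Nat.find_le ⟨J, hJgen, hJF, hIK.trans hKJ⟩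
    have hmm : m = Nat.find hQ := le_antisymm hm hfind
    by_contra hne'
    obtain ⟨x, hx⟩ := hKne
    exact Set.disjoint_left.mp
      (treeGen_disjoint hT (Nat.find hQ) (hmm ▸ hJgen) hKgen hne') (hKJ hx) hx

end TreeAux
section WeakAux

variable {X : Type*} [MeasurableSpace X] {μ : Measure X} {T : Set (Set X)}
  {C : Set X → Set (Set X)}

lemma tree_nested (hT : IsTree μ T C) {I J : Set X} (hI : I ∈ T) (hJ : J ∈ T)
    (hne : (I ∩ J).Nonempty) : I ⊆ J ∨ J ⊆ I := by
  have key : ∀ m n, m ≤ n → ∀ I' ∈ treeGen C m, ∀ J' ∈ treeGen C n,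
      (I' ∩ J').Nonempty → J' ⊆ I' := by
    intro m n hmn I' hI' J' hJ' hint
    obtain ⟨x, hxI, hxJ⟩ := hint
    obtain ⟨K, hK, hsub⟩ := treeGen_ancestor hT n m hmn J' hJ'
    have hKI : K = I' := by
      by_contra h
      exact Set.disjoint_left.mp (treeGen_disjoint hT m hK hI' h) (hsub hxJ) hxI
    exact hKI ▸ hsub
  rw [hT.eq_gen] at hI hJ
  simp only [Set.mem_iUnion] at hI hJ
  obtain ⟨m, hm⟩ := hI
  obtain ⟨n, hn⟩ := hJ
  rcases le_total m n with h | h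
  · exact Or.inr (key m n h I hm J hn hne)
  · exact Or.inl (key n m h J hn I hm (Set.inter_comm I J ▸ hne))

variable (μ T φ) in
/-- The family of tree elements where the average of `φ` exceeds `lam`. -/
def Fam (φ : X → ℝ) (lam : ℝ) : Set (Set X) :=
  {I | I ∈ T ∧ lam * (μ I).toReal < ∫ u in I, φ u ∂μ}

variable (μ T φ) in
/-- The union of the tree elements where the average of `φ` exceeds `lam`. -/
def Us (φ : X → ℝ) (lam : ℝ) : Set X := ⋃₀ Fam μ T φ lam

lemma Fam_subset {φ : X → ℝ} {lam : ℝ} : Fam μ T φ lam ⊆ T := fun _ hI => hI.1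

lemma measurableSet_Us (hT : IsTree μ T C) (φ : X → ℝ) (lam : ℝ) :
    MeasurableSet (Us μ T φ lam) :=
  MeasurableSet.sUnion ((tree_countable hT).mono Fam_subset)
    fun I hI => hT.measurableSet I hI.1

lemma weak_bound (hT : IsTree μ T C) {φ : X → ℝ} (hφ0 : ∀ x, 0 ≤ φ x)
    (hφ1 : Integrable φ μ) [IsFiniteMeasure μ] {lam : ℝ} (hlam : 0 ≤ lam) :
    ENNReal.ofReal lam * μ (Us μ T φ lam) ≤
      ∫⁻ x in Us μ T φ lam, ENNReal.ofReal (φ x) ∂μ := by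
  classical
  set Fm : Set (Set X) :=
    {I | I ∈ Fam μ T φ lam ∧ ∀ J ∈ Fam μ T φ lam, I ⊆ J → J = I} with hFmdef
  have hFmsub : Fm ⊆ Fam μ T φ lam := fun I hI => hI.1
  have hFmT : Fm ⊆ T := hFmsub.trans Fam_subset
  have hU : Us μ T φ lam = ⋃₀ Fm := by
    apply Set.Subset.antisymm
    · rintro x ⟨I, hI, hx⟩
      obtain ⟨K, hKF, hIK, hmax⟩ := tree_exists_maximal hT (Fam_subset) hI
      exact ⟨K, ⟨hKF, hmax⟩, hIK hx⟩
    · exact Set.sUnion_mono hFmsub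
  have hcnt : Fm.Countable := (tree_countable hT).mono hFmT
  haveI := hcnt.to_subtype
  have hdisj : Pairwise (fun (K₁ K₂ : ↥Fm) => Disjoint (K₁ : Set X) (K₂ : Set X)) := by
    rintro ⟨K₁, hK₁⟩ ⟨K₂, hK₂⟩ hne
    have hne' : K₁ ≠ K₂ := fun h => hne (Subtype.ext h)
    by_contra hd
    have hint : (K₁ ∩ K₂).Nonempty := Set.not_disjoint_iff_nonempty_inter.mp hd
    rcases tree_nested hT (hFmT hK₁) (hFmT hK₂) hint with h | h
    · exact hne' (hK₁.2 K₂ hK₂.1 h).symm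
    · exact hne' (hK₂.2 K₁ hK₁.1 h)
  have hmeas : ∀ K : ↥Fm, MeasurableSet (K : Set X) :=
    fun K => hT.measurableSet K (hFmT K.2)
  have hUeq : Us μ T φ lam = ⋃ K : ↥Fm, (K : Set X) := by
    rw [hU, Set.sUnion_eq_iUnion]
  rw [hUeq, measure_iUnion hdisj hmeas, lintegral_iUnion hmeas hdisj,
    ← ENNReal.tsum_mul_left]
  refine ENNReal.tsum_le_tsum fun K => ?_
  obtain ⟨hKT, hKlt⟩ := hFmsub K.2
  have h1 : ENNReal.ofReal lam * μ (K : Set X)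
      = ENNReal.ofReal (lam * (μ (K : Set X)).toReal) := by
    rw [ENNReal.ofReal_mul hlam, ENNReal.ofReal_toReal (measure_ne_top μ _)]
  rw [h1]
  calc ENNReal.ofReal (lam * (μ (K : Set X)).toReal)
      ≤ ENNReal.ofReal (∫ u in (K : Set X), φ u ∂μ) :=
        ENNReal.ofReal_le_ofReal hKlt.le
    _ = ∫⁻ u in (K : Set X), ENNReal.ofReal (φ u) ∂μ :=
        MeasureTheory.ofReal_integral_eq_lintegral_ofReal hφ1.integrableOn
          (Filter.Eventually.of_forall hφ0)

end WeakAux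
section MaxAux

variable {X : Type*} [MeasurableSpace X] {μ : Measure X} {T : Set (Set X)}
  {C : Set X → Set (Set X)}

variable (μ T) in
/-- The bad set where the maximal function is infinite. -/
def Nbad (φ : X → ℝ) : Set X := ⋂ n : ℕ, Us μ T φ n

lemma measurableSet_Nbad (hT : IsTree μ T C) (φ : X → ℝ) :
    MeasurableSet (Nbad μ T φ) :=
  MeasurableSet.iInter fun n => measurableSet_Us hT φ n

lemma abs_setIntegral {φ : X → ℝ} (hφ0 : ∀ x, 0 ≤ φ x) (I : Set X) :
    ∫ u in I, |φ u| ∂μ = ∫ u in I, φ u ∂μ :=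
  integral_congr_ae (Filter.Eventually.of_forall fun u => abs_of_nonneg (hφ0 u))

lemma maxT_nonneg {φ : X → ℝ} (hφ0 : ∀ x, 0 ≤ φ x) (x : X) :
    0 ≤ maxT μ T φ x := by
  apply Real.sSup_nonneg
  rintro r ⟨I, hIT, hxI, rfl⟩
  exact div_nonneg (integral_nonneg fun u => abs_nonneg _) ENNReal.toReal_nonneg

lemma maxT_gt_eq (hT : IsTree μ T C) [IsFiniteMeasure μ] {φ : X → ℝ}
    (hφ0 : ∀ x, 0 ≤ φ x) {lam : ℝ} (hlam : 0 ≤ lam) :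
    {x | lam < maxT μ T φ x} = Us μ T φ lam \ Nbad μ T φ := by
  ext x
  have hSne : {r : ℝ | ∃ I ∈ T, x ∈ I ∧ r = (∫ u in I, |φ u| ∂μ) / (μ I).toReal}.Nonempty :=
    ⟨_, Set.univ, hT.univ_mem, Set.mem_univ x, rfl⟩
  have hpos : ∀ I ∈ T, 0 < (μ I).toReal := fun I hIT =>
    ENNReal.toReal_pos (hT.pos I hIT).ne' (measure_ne_top μ I)
  constructor
  · intro h
    simp only [Set.mem_setOf_eq, maxT] at h
    have hbdd : BddAbove
        {r : ℝ | ∃ I ∈ T, x ∈ I ∧ r = (∫ u in I, |φ u| ∂μ) / (μ I).toReal} := by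
      by_contra hb
      rw [Real.sSup_of_not_bddAbove hb] at h
      linarith
    obtain ⟨r, hr, hlt⟩ := exists_lt_of_lt_csSup hSne h
    obtain ⟨I, hIT, hxI, rfl⟩ := hr
    have hI : lam * (μ I).toReal < ∫ u in I, φ u ∂μ := by
      rw [← abs_setIntegral hφ0]
      exact (lt_div_iff₀ (hpos I hIT)).mp hlt
    refine ⟨⟨I, ⟨hIT, hI⟩, hxI⟩, ?_⟩
    intro hN
    simp only [Nbad, Set.mem_iInter] at hN
    obtain ⟨c, hc⟩ := hbdd
    obtain ⟨n, hcn⟩ := exists_nat_gt c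
    obtain ⟨J, ⟨hJT, hJlt⟩, hxJ⟩ := hN n
    have h1 : (n : ℝ) < (∫ u in J, |φ u| ∂μ) / (μ J).toReal := by
      rw [abs_setIntegral hφ0]
      exact (lt_div_iff₀ (hpos J hJT)).mpr hJlt
    have h2 : (∫ u in J, |φ u| ∂μ) / (μ J).toReal ≤ c := hc ⟨J, hJT, hxJ, rfl⟩
    linarith
  · rintro ⟨⟨I, ⟨hIT, hI⟩, hxI⟩, hN⟩
    simp only [Set.mem_setOf_eq, maxT]
    simp only [Nbad, Set.mem_iInter, not_forall] at hN
    obtain ⟨n, hn⟩ := hN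
    have hbdd : BddAbove
        {r : ℝ | ∃ I ∈ T, x ∈ I ∧ r = (∫ u in I, |φ u| ∂μ) / (μ I).toReal} := by
      refine ⟨n, ?_⟩
      rintro r ⟨J, hJT, hxJ, rfl⟩
      by_contra hr
      push_neg at hr
      have : (n : ℝ) * (μ J).toReal < ∫ u in J, φ u ∂μ := by
        rw [← abs_setIntegral hφ0]
        exact (lt_div_iff₀ (hpos J hJT)).mp hr
      exact hn ⟨J, ⟨hJT, this⟩, hxJ⟩
    have hmem : (∫ u in I, |φ u| ∂μ) / (μ I).toReal ∈
        {r : ℝ | ∃ I ∈ T, x ∈ I ∧ r = (∫ u in I, |φ u| ∂μ) / (μ I).toReal} :=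
      ⟨I, hIT, hxI, rfl⟩
    have hlt : lam < (∫ u in I, |φ u| ∂μ) / (μ I).toReal := by
      rw [abs_setIntegral hφ0]
      exact (lt_div_iff₀ (hpos I hIT)).mpr hI
    exact lt_of_lt_of_le hlt (le_csSup hbdd hmem)

end MaxAux
section MaxAux2

variable {X : Type*} [MeasurableSpace X] {μ : Measure X} {T : Set (Set X)}
  {C : Set X → Set (Set X)}

lemma measurable_maxT (hT : IsTree μ T C) [IsFiniteMeasure μ] {φ : X → ℝ}
    (hφ0 : ∀ x, 0 ≤ φ x) : Measurable (maxT μ T φ) := by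
  apply measurable_of_Ioi
  intro a
  rcases lt_or_ge a 0 with ha | ha
  · have : maxT μ T φ ⁻¹' Set.Ioi a = Set.univ := by
      ext x
      simp only [Set.mem_preimage, Set.mem_Ioi, Set.mem_univ, iff_true]
      exact lt_of_lt_of_le ha (maxT_nonneg hφ0 x)
    rw [this]
    exact MeasurableSet.univ
  · have : maxT μ T φ ⁻¹' Set.Ioi a = Us μ T φ a \ Nbad μ T φ := by
      rw [← maxT_gt_eq hT hφ0 ha]
      rfl
    rw [this]
    exact (measurableSet_Us hT φ a).diff (measurableSet_Nbad hT φ)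

lemma measure_Nbad_zero (hT : IsTree μ T C) [IsProbabilityMeasure μ] {φ : X → ℝ}
    (hφ0 : ∀ x, 0 ≤ φ x) (hφ1 : Integrable φ μ) : μ (Nbad μ T φ) = 0 := by
  have hUle : ∀ n : ℕ, ENNReal.ofReal n * μ (Nbad μ T φ) ≤
      ENNReal.ofReal (∫ x, φ x ∂μ) := by
    intro n
    calc ENNReal.ofReal n * μ (Nbad μ T φ)
        ≤ ENNReal.ofReal n * μ (Us μ T φ n) :=
          mul_le_mul_right (measure_mono (Set.iInter_subset _ n)) _
      _ ≤ ∫⁻ x in Us μ T φ n, ENNReal.ofReal (φ x) ∂μ :=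
          weak_bound hT hφ0 hφ1 (Nat.cast_nonneg n)
      _ ≤ ∫⁻ x, ENNReal.ofReal (φ x) ∂μ := setLIntegral_le_lintegral _ _
      _ = ENNReal.ofReal (∫ x, φ x ∂μ) :=
          (MeasureTheory.ofReal_integral_eq_lintegral_ofReal hφ1
            (Filter.Eventually.of_forall hφ0)).symm
  by_contra h
  have hfin : μ (Nbad μ T φ) ≠ ⊤ := measure_ne_top μ _
  have hpos : 0 < (μ (Nbad μ T φ)).toReal := ENNReal.toReal_pos h hfin
  obtain ⟨n, hn⟩ := exists_nat_gt ((∫ x, φ x ∂μ) / (μ (Nbad μ T φ)).toReal)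
  have hlt : (∫ x, φ x ∂μ) < n * (μ (Nbad μ T φ)).toReal := (div_lt_iff₀ hpos).mp hn
  have hn0 : (0 : ℝ) < n :=
    lt_of_le_of_lt (div_nonneg (integral_nonneg hφ0) hpos.le) hn
  have h2 : ENNReal.ofReal (∫ x, φ x ∂μ) < ENNReal.ofReal n * μ (Nbad μ T φ) := by
    rw [← ENNReal.ofReal_toReal hfin, ← ENNReal.ofReal_mul (Nat.cast_nonneg n)]
    exact (ENNReal.ofReal_lt_ofReal_iff (mul_pos hn0 hpos)).mpr hlt
  exact absurd (hUle n) (not_le.mpr h2)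

end MaxAux2
open intervalIntegral in
/-- inequality (5.1). -/
theorem statement13 {X : Type*} [MeasurableSpace X] (μ : Measure X)
    [IsProbabilityMeasure μ] [NullSingletonClass μ]
    (T : Set (Set X)) (C : Set X → Set (Set X)) (hT : IsTree μ T C)
    (p : ℝ) (hp : 1 < p)
    (φ : X → ℝ) (hφm : Measurable φ) (hφ0 : ∀ x, 0 ≤ φ x)
    (hφ1 : Integrable φ μ) (hφLp : MemLp φ (ENNReal.ofReal p) μ)
    (f L : ℝ) (hmean : ∫ x, φ x ∂μ = f) (hL : f ≤ L) :
    (∫ x, (max (maxT μ T φ x) L) ^ p ∂μ) ≤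
      L ^ p - (p / (p - 1)) * L ^ (p - 1) * f +
        (p / (p - 1)) * ∫ x, φ x * (max (maxT μ T φ x) L) ^ (p - 1) ∂μ := by
  have hf0 : 0 ≤ f := hmean ▸ integral_nonneg hφ0
  have hp0 : 0 < p := lt_trans one_pos hp
  have hp1 : 0 < p - 1 := by linarith
  rcases eq_or_lt_of_le (hf0.trans hL) with hL0 | hL0
  · -- degenerate case L = 0
    have hLz : L = 0 := hL0.symm
    subst hLz
    have hfz : f = 0 := le_antisymm hL hf0
    have hzero : φ =ᵐ[μ] 0 :=
      (integral_eq_zero_iff_of_nonneg_ae (Filter.Eventually.of_forall hφ0) hφ1).mp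
        (hmean.trans hfz)
    have hint0 : ∀ I : Set X, ∫ u in I, |φ u| ∂μ = 0 := by
      intro I
      rw [integral_congr_ae (g := fun _ => (0 : ℝ))
        (ae_restrict_of_ae (hzero.mono fun x hx => by simp [hx]))]
      simp
    have hM : ∀ x, maxT μ T φ x = 0 := by
      intro x
      have hset : {r : ℝ | ∃ I ∈ T, x ∈ I ∧ r = (∫ u in I, |φ u| ∂μ) / (μ I).toReal}
          = {0} := by
        ext r
        simp only [Set.mem_setOf_eq, Set.mem_singleton_iff]
        constructor
        · rintro ⟨I, _, _, rfl⟩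
          rw [hint0 I, zero_div]
        · rintro rfl
          exact ⟨Set.univ, hT.univ_mem, Set.mem_univ x, by rw [hint0]; simp⟩
      rw [maxT, hset, csSup_singleton]
    simp only [hM, max_self, hfz]
    rw [Real.zero_rpow hp0.ne', Real.zero_rpow (by linarith : p - 1 ≠ 0)]
    simp
  · -- main case 0 < L
    set ψ := fun x => max (maxT μ T φ x) L with hψdef
    have hψm : Measurable ψ := (measurable_maxT hT hφ0).max measurable_const
    have hψL : ∀ x, L ≤ ψ x := fun x => le_max_right _ _
    have hψ0 : ∀ x, 0 ≤ ψ x := fun x => hL0.le.trans (hψL x)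
    have hNull : μ (Nbad μ T φ) = 0 := measure_Nbad_zero hT hφ0 hφ1
    have hgen : ∀ t : ℝ, L ≤ t → {x | t < ψ x} = Us μ T φ t \ Nbad μ T φ := by
      intro t ht
      rw [← maxT_gt_eq hT hφ0 (hL0.le.trans ht)]
      ext x
      simp only [Set.mem_setOf_eq, hψdef, lt_max_iff, or_iff_left (not_lt.mpr ht)]
    have hAuniv : ∀ t : ℝ, t < L → {x | t < ψ x} = Set.univ := fun t ht =>
      Set.eq_univ_of_forall fun x => lt_of_lt_of_le ht (hψL x)
    have hSmeas : ∀ t : ℝ, MeasurableSet {x | t < ψ x} := fun t =>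
      hψm measurableSet_Ioi
    -- the key weak-type estimate
    have keyAB : ∀ t : ℝ, L ≤ t →
        ENNReal.ofReal t * μ {x | t < ψ x} ≤
          ∫⁻ x in {x | t < ψ x}, ENNReal.ofReal (φ x) ∂μ := by
      intro t ht
      have hdiff : (Us μ T φ t \ Nbad μ T φ : Set X) =ᵐ[μ] Us μ T φ t :=
        MeasureTheory.diff_ae_eq_self.mpr
          (measure_mono_null Set.inter_subset_right hNull)
      rw [hgen t ht]
      calc ENNReal.ofReal t * μ (Us μ T φ t \ Nbad μ T φ)
          = ENNReal.ofReal t * μ (Us μ T φ t) := by rw [measure_congr hdiff]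
        _ ≤ ∫⁻ x in Us μ T φ t, ENNReal.ofReal (φ x) ∂μ :=
            weak_bound hT hφ0 hφ1 (hL0.le.trans ht)
        _ = ∫⁻ x in Us μ T φ t \ Nbad μ T φ, ENNReal.ofReal (φ x) ∂μ :=
            (setLIntegral_congr hdiff).symm
    -- splitting the half-line
    have hsplit : ∀ g : ℝ → ℝ≥0∞, ∫⁻ t in Set.Ioi (0:ℝ), g t
        = (∫⁻ t in Set.Ioo (0:ℝ) L, g t) + ∫⁻ t in Set.Ioi L, g t := by
      intro g
      rw [← Set.Ioo_union_Ici_eq_Ioi hL0,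
        lintegral_union measurableSet_Ici
          (Set.disjoint_left.mpr fun x hx hx' => absurd hx' (not_le.mpr hx.2))]
      congr 1
      exact setLIntegral_congr (Ioi_ae_eq_Ici (μ := volume) (a := L)).symm
    have hconst : ∀ r : ℝ, -1 < r → ∫⁻ t in Set.Ioo (0:ℝ) L, ENNReal.ofReal (t ^ r)
        = ENNReal.ofReal (L ^ (r+1) / (r+1)) := by
      intro r hr
      have hint : IntervalIntegrable (fun t : ℝ => t ^ r) volume 0 L :=
        intervalIntegral.intervalIntegrable_rpow' hr
      have h1 : ENNReal.ofReal (∫ t in Set.Ioo (0:ℝ) L, t ^ r)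
          = ∫⁻ t in Set.Ioo (0:ℝ) L, ENNReal.ofReal (t ^ r) :=
        MeasureTheory.ofReal_integral_eq_lintegral_ofReal
          ((hint.1).mono_set Set.Ioo_subset_Ioc_self)
          ((ae_restrict_iff' measurableSet_Ioo).mpr
            (Filter.Eventually.of_forall fun t ht => Real.rpow_nonneg ht.1.le r))
      rw [← h1]
      congr 1
      rw [← MeasureTheory.integral_Ioc_eq_integral_Ioo,
        ← integral_of_le hL0.le,
        integral_rpow (Or.inl hr),
        Real.zero_rpow (by linarith : r + 1 ≠ 0)]
      ring
    -- layer cake for the left-hand side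
    set J' := ∫⁻ t in Set.Ioi L, μ {x | t < ψ x} * ENNReal.ofReal (t^(p-1)) with hJ'def
    have hLHS : ∫⁻ x, ENNReal.ofReal (ψ x ^ p) ∂μ
        = ENNReal.ofReal (L ^ p) + ENNReal.ofReal p * J' := by
      rw [MeasureTheory.lintegral_rpow_eq_lintegral_meas_lt_mul μ
        (Filter.Eventually.of_forall hψ0) hψm.aemeasurable hp0, hsplit]
      have h2 : ∫⁻ t in Set.Ioo (0:ℝ) L, μ {a | t < ψ a} * ENNReal.ofReal (t ^ (p-1))
          = ∫⁻ t in Set.Ioo (0:ℝ) L, ENNReal.ofReal (t^(p-1)) := by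
        apply setLIntegral_congr_fun measurableSet_Ioo
        exact fun t ht => by
          rw [hAuniv t ht.2, measure_univ, one_mul]
      rw [h2, hconst (p-1) (by linarith), mul_add]
      have hpp : p - 1 + 1 = p := by ring
      rw [hpp]
      congr 1
      rw [← ENNReal.ofReal_mul hp0.le]
      congr 1
      field_simp
    -- layer cake for the right-hand side, with density φ dμ
    set ν := μ.withDensity (fun x => ENNReal.ofReal (φ x)) with hνdef
    have hφm' : Measurable fun x => ENNReal.ofReal (φ x) := hφm.ennreal_ofReal
    have hν_apply : ∀ s : Set X, MeasurableSet s →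
        ν s = ∫⁻ x in s, ENNReal.ofReal (φ x) ∂μ := fun s hs =>
      withDensity_apply _ hs
    have hνf : ν Set.univ = ENNReal.ofReal f := by
      rw [hν_apply Set.univ MeasurableSet.univ, Measure.restrict_univ,
        ← MeasureTheory.ofReal_integral_eq_lintegral_ofReal hφ1
          (Filter.Eventually.of_forall hφ0), hmean]
    have hψp1m : Measurable fun x => ψ x ^ (p-1) := hψm.pow measurable_const
    have hwd : ∫⁻ x, ENNReal.ofReal (ψ x ^ (p-1)) ∂ν
        = ∫⁻ x, ENNReal.ofReal (φ x * ψ x ^ (p-1)) ∂μ := by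
      rw [hνdef, lintegral_withDensity_eq_lintegral_mul μ hφm' hψp1m.ennreal_ofReal]
      exact lintegral_congr fun x => by
        simp only [Pi.mul_apply]
        rw [← ENNReal.ofReal_mul (hφ0 x)]
    set J := ∫⁻ t in Set.Ioi L,
      (∫⁻ x in {x | t < ψ x}, ENNReal.ofReal (φ x) ∂μ) * ENNReal.ofReal (t^(p-2))
      with hJdef
    have hp12 : p - 1 - 1 = p - 2 := by ring
    have hRHS : ∫⁻ x, ENNReal.ofReal (φ x * ψ x ^ (p-1)) ∂μ
        = ENNReal.ofReal (f * L ^ (p-1)) + ENNReal.ofReal (p-1) * J := by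
      rw [← hwd, MeasureTheory.lintegral_rpow_eq_lintegral_meas_lt_mul ν
        (Filter.Eventually.of_forall hψ0) hψm.aemeasurable hp1, hsplit]
      have h2 : ∫⁻ t in Set.Ioo (0:ℝ) L, ν {a | t < ψ a} * ENNReal.ofReal (t ^ (p-1-1))
          = ∫⁻ t in Set.Ioo (0:ℝ) L, ENNReal.ofReal f * ENNReal.ofReal (t^(p-2)) := by
        apply setLIntegral_congr_fun measurableSet_Ioo
        refine fun t ht => ?_
        beta_reduce
        rw [hAuniv t ht.2, hνf, hp12]
      have h3 : ∫⁻ t in Set.Ioi L, ν {a | t < ψ a} * ENNReal.ofReal (t ^ (p-1-1)) = J := by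
        rw [hJdef]
        apply setLIntegral_congr_fun measurableSet_Ioi
        refine fun t ht => ?_
        beta_reduce
        rw [hν_apply _ (hSmeas t), hp12]
      rw [h2, h3, lintegral_const_mul' _ _ ENNReal.ofReal_ne_top,
        hconst (p-2) (by linarith), mul_add]
      have hpp : p - 2 + 1 = p - 1 := by ring
      rw [hpp]
      congr 1
      rw [← ENNReal.ofReal_mul hf0, ← ENNReal.ofReal_mul hp1.le]
      congr 1
      field_simp
    -- comparison of the two tail integrals
    have hJ'J : J' ≤ J := by
      rw [hJ'def, hJdef]
      refine lintegral_mono_ae ((ae_restrict_iff' measurableSet_Ioi).mpr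
        (Filter.Eventually.of_forall fun t ht => ?_))
      have ht0 : 0 < t := lt_trans hL0 ht
      have h1 : ENNReal.ofReal (t ^ (p-1))
          = ENNReal.ofReal t * ENNReal.ofReal (t^(p-2)) := by
        rw [← ENNReal.ofReal_mul ht0.le]
        congr 1
        rw [show p - 1 = 1 + (p-2) by ring, Real.rpow_add ht0, Real.rpow_one]
      rw [h1, ← mul_assoc, mul_comm (μ {x | t < ψ x}) (ENNReal.ofReal t)]
      exact mul_le_mul_left (keyAB t ht.le) _
        -- finiteness via the doubling trick
    have hφp : ∫⁻ x, ENNReal.ofReal (φ x ^ p) ∂μ < ⊤ := by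
      have h1 := hφLp.2
      rw [eLpNorm_lt_top_iff_lintegral_rpow_enorm_lt_top
        (fun h => absurd (ENNReal.ofReal_eq_zero.mp h) (not_le.mpr hp0))
        ENNReal.ofReal_ne_top] at h1
      have h2 : ∀ x, (‖φ x‖ₑ) ^ (ENNReal.ofReal p).toReal
          = ENNReal.ofReal (φ x ^ p) := by
        intro x
        rw [ENNReal.toReal_ofReal hp0.le, Real.enorm_eq_ofReal (hφ0 x),
          ENNReal.ofReal_rpow_of_nonneg (hφ0 x) hp0.le]
      rwa [lintegral_congr h2] at h1
    have hGmeas : ∀ t : ℝ, MeasurableSet {x | t < 2 * φ x} := fun t =>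
      measurableSet_lt measurable_const (hφm.const_mul 2)
    have hKfin : ∫⁻ t in Set.Ioi (0:ℝ),
        ν {x | t < 2 * φ x} * ENNReal.ofReal (t ^ (p-2)) < ⊤ := by
      have hnn : 0 ≤ᵐ[ν] fun x => 2 * φ x :=
        Filter.Eventually.of_forall fun x => mul_nonneg two_pos.le (hφ0 x)
      have hLC3 := MeasureTheory.lintegral_rpow_eq_lintegral_meas_lt_mul ν hnn
        ((hφm.const_mul 2).aemeasurable) hp1
      have hL3 : ∫⁻ x, ENNReal.ofReal ((2 * φ x) ^ (p-1)) ∂ν < ⊤ := by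
        rw [hνdef, lintegral_withDensity_eq_lintegral_mul μ hφm'
          ((hφm.const_mul 2).pow measurable_const).ennreal_ofReal]
        have hpt : ∀ x, ((fun x => ENNReal.ofReal (φ x)) *
            (fun x => ENNReal.ofReal ((2 * φ x) ^ (p-1)))) x
            = ENNReal.ofReal (2 ^ (p-1)) * ENNReal.ofReal (φ x ^ p) := by
          intro x
          simp only [Pi.mul_apply]
          rw [← ENNReal.ofReal_mul (hφ0 x),
            ← ENNReal.ofReal_mul (Real.rpow_nonneg (by norm_num) _)]
          congr 1
          rw [Real.mul_rpow (by norm_num) (hφ0 x)]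
          have hxp : φ x ^ ((1:ℝ) + (p-1)) = φ x ^ (1:ℝ) * φ x ^ (p-1) :=
            Real.rpow_add' (hφ0 x)
              (by rw [show (1:ℝ) + (p-1) = p by ring]; exact hp0.ne')
          rw [show (1:ℝ) + (p-1) = p by ring] at hxp
          rw [hxp, Real.rpow_one]
          ring
        rw [lintegral_congr hpt, lintegral_const_mul' _ _ ENNReal.ofReal_ne_top]
        exact ENNReal.mul_lt_top ENNReal.ofReal_lt_top hφp
      rw [hLC3] at hL3
      have hfin2 := ENNReal.lt_top_of_mul_ne_top_right hL3.ne
        (fun h => absurd (ENNReal.ofReal_eq_zero.mp h) (not_le.mpr hp1))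
      simp only [hp12] at hfin2
      exact hfin2
    have hBG : ∀ t : ℝ, L < t →
        (∫⁻ x in {x | t < ψ x}, ENNReal.ofReal (φ x) ∂μ)
          ≤ 2 * ν {x | t < 2 * φ x} := by
      intro t ht
      have ht0 : 0 < t := hL0.trans ht
      have hS := hSmeas t
      have hsplitB := lintegral_inter_add_diff (μ := μ) (fun x => ENNReal.ofReal (φ x))
        {x | t < ψ x} (hGmeas t)
      have h1 : ∫⁻ x in {x | t < ψ x} ∩ {x | t < 2 * φ x}, ENNReal.ofReal (φ x) ∂μ
          ≤ ν {x | t < 2 * φ x} := by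
        rw [hν_apply _ (hGmeas t)]
        exact lintegral_mono_set Set.inter_subset_right
      have h2 : ∫⁻ x in {x | t < ψ x} \ {x | t < 2 * φ x}, ENNReal.ofReal (φ x) ∂μ
          ≤ ENNReal.ofReal (t/2) * μ {x | t < ψ x} := by
        calc ∫⁻ x in {x | t < ψ x} \ {x | t < 2 * φ x}, ENNReal.ofReal (φ x) ∂μ
            ≤ ∫⁻ _x in {x | t < ψ x} \ {x | t < 2 * φ x}, ENNReal.ofReal (t/2) ∂μ := by
              refine lintegral_mono_ae ((ae_restrict_iff' (hS.diff (hGmeas t))).mpr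
                (Filter.Eventually.of_forall fun x hx => ?_))
              have hxle : ¬ t < 2 * φ x := hx.2
              exact ENNReal.ofReal_le_ofReal (by push_neg at hxle; linarith)
          _ = ENNReal.ofReal (t/2) * μ ({x | t < ψ x} \ {x | t < 2 * φ x}) :=
              setLIntegral_const _ _
          _ ≤ ENNReal.ofReal (t/2) * μ {x | t < ψ x} :=
              mul_le_mul_right (measure_mono Set.diff_subset) _
      have hBle : (∫⁻ x in {x | t < ψ x}, ENNReal.ofReal (φ x) ∂μ)
          ≤ ν {x | t < 2 * φ x} + ENNReal.ofReal (t/2) * μ {x | t < ψ x} := by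
        rw [← hsplitB]
        exact add_le_add h1 h2
      have hAfin : ENNReal.ofReal (t/2) * μ {x | t < ψ x} ≠ ⊤ :=
        (ENNReal.mul_lt_top ENNReal.ofReal_lt_top (measure_lt_top μ _)).ne
      have hstep : ENNReal.ofReal (t/2) * μ {x | t < ψ x} ≤ ν {x | t < 2 * φ x} := by
        have h3 : ENNReal.ofReal (t/2) * μ {x | t < ψ x}
            + ENNReal.ofReal (t/2) * μ {x | t < ψ x}
            ≤ ν {x | t < 2 * φ x} + ENNReal.ofReal (t/2) * μ {x | t < ψ x} := by
          calc ENNReal.ofReal (t/2) * μ {x | t < ψ x}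
              + ENNReal.ofReal (t/2) * μ {x | t < ψ x}
              = ENNReal.ofReal t * μ {x | t < ψ x} := by
                rw [← add_mul, ← ENNReal.ofReal_add (by linarith) (by linarith)]
                norm_num
            _ ≤ _ := le_trans (keyAB t ht.le) hBle
        exact (ENNReal.add_le_add_iff_right hAfin).mp h3
      calc (∫⁻ x in {x | t < ψ x}, ENNReal.ofReal (φ x) ∂μ)
          ≤ ν {x | t < 2 * φ x} + ENNReal.ofReal (t/2) * μ {x | t < ψ x} := hBle
        _ ≤ ν {x | t < 2 * φ x} + ν {x | t < 2 * φ x} := add_le_add le_rfl hstep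
        _ = 2 * ν {x | t < 2 * φ x} := (two_mul _).symm
    have hJfin : J ≠ ⊤ := by
      have hJle : J ≤ 2 * ∫⁻ t in Set.Ioi (0:ℝ),
          ν {x | t < 2 * φ x} * ENNReal.ofReal (t ^ (p-2)) := by
        calc J ≤ ∫⁻ t in Set.Ioi L,
              2 * ν {x | t < 2 * φ x} * ENNReal.ofReal (t ^ (p-2)) := by
              rw [hJdef]
              exact lintegral_mono_ae ((ae_restrict_iff' measurableSet_Ioi).mpr
                (Filter.Eventually.of_forall fun t ht =>
                  mul_le_mul_left (hBG t ht) _))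
          _ ≤ ∫⁻ t in Set.Ioi (0:ℝ),
              2 * ν {x | t < 2 * φ x} * ENNReal.ofReal (t ^ (p-2)) :=
              lintegral_mono_set (Set.Ioi_subset_Ioi hL0.le)
          _ = 2 * ∫⁻ t in Set.Ioi (0:ℝ),
              ν {x | t < 2 * φ x} * ENNReal.ofReal (t ^ (p-2)) := by
              simp_rw [mul_assoc]
              exact lintegral_const_mul' _ _ (by norm_num)
      exact (lt_of_le_of_lt hJle (ENNReal.mul_lt_top (by norm_num) hKfin)).ne
    have hJ'fin : J' ≠ ⊤ := (lt_of_le_of_lt hJ'J hJfin.lt_top).ne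
    -- back to Bochner integrals
    have hint1 : ∫ x, ψ x ^ p ∂μ = (∫⁻ x, ENNReal.ofReal (ψ x ^ p) ∂μ).toReal :=
      integral_eq_lintegral_of_nonneg_ae
        (Filter.Eventually.of_forall fun x => Real.rpow_nonneg (hψ0 x) p)
        (hψm.pow measurable_const).aestronglyMeasurable
    have hint2 : ∫ x, φ x * ψ x ^ (p-1) ∂μ
        = (∫⁻ x, ENNReal.ofReal (φ x * ψ x ^ (p-1)) ∂μ).toReal :=
      integral_eq_lintegral_of_nonneg_ae
        (Filter.Eventually.of_forall fun x =>
          mul_nonneg (hφ0 x) (Real.rpow_nonneg (hψ0 x) _))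
        (hφm.mul hψp1m).aestronglyMeasurable
    have hT1 : (∫⁻ x, ENNReal.ofReal (ψ x ^ p) ∂μ).toReal
        = L ^ p + p * J'.toReal := by
      rw [hLHS, ENNReal.toReal_add ENNReal.ofReal_ne_top
        (ENNReal.mul_ne_top ENNReal.ofReal_ne_top hJ'fin), ENNReal.toReal_mul,
        ENNReal.toReal_ofReal (Real.rpow_nonneg hL0.le p),
        ENNReal.toReal_ofReal hp0.le]
    have hT2 : (∫⁻ x, ENNReal.ofReal (φ x * ψ x ^ (p-1)) ∂μ).toReal
        = f * L ^ (p-1) + (p-1) * J.toReal := by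
      rw [hRHS, ENNReal.toReal_add ENNReal.ofReal_ne_top
        (ENNReal.mul_ne_top ENNReal.ofReal_ne_top hJfin), ENNReal.toReal_mul,
        ENNReal.toReal_ofReal (mul_nonneg hf0 (Real.rpow_nonneg hL0.le _)),
        ENNReal.toReal_ofReal hp1.le]
    have hmono : J'.toReal ≤ J.toReal := ENNReal.toReal_mono hJfin hJ'J
    show (∫ x, ψ x ^ p ∂μ) ≤ L ^ p - (p / (p - 1)) * L ^ (p - 1) * f +
        (p / (p - 1)) * ∫ x, φ x * ψ x ^ (p - 1) ∂μ
    rw [hint1, hint2, hT1, hT2]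
    have hexp : L ^ p - (p / (p - 1)) * L ^ (p - 1) * f +
        (p / (p - 1)) * (f * L ^ (p - 1) + (p - 1) * J.toReal)
        = L ^ p + p * J.toReal := by
      field_simp
      ring
    rw [hexp]
    have hfin := mul_le_mul_of_nonneg_left hmono hp0.le
    linarith
end
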